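/- arXiv:1005.0316 — 5 statements merged into one kernel-verified Lean document; each statement's English description precedes it below -/
import Mathlib

section
/- Let S₀, S₁ be pair-partitions of [2k], let λ be a partition, and let f be a function from {1,…,2k} to the boxes of 2λ satisfying conditions (P0) and (P1) with respect to (S₀,S₁). If f(i) = f(j) and j lies in the same orbit as i under the subgroup generated by S₀ and S₁, then j = (S₀∘S₁)^m(i) for some integer m; that is, i and j are at even distance in their common loop of L(S₀,S₁). -/
open scoped BigOperators

namespace ZonalPP

/-- A pair-partition of `[N]` (with `N` even), encoded as a fixed-point-free involution. -/
def IsPairPartition {N : ℕ} (s : Equiv.Perm (Fin N)) : Prop :=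
  Function.Involutive s ∧ ∀ x, s x ≠ x

noncomputable instance {G α : Type*} [Group G] [MulAction G α] [Finite α] :
    Fintype (MulAction.orbitRel.Quotient G α) :=
  Fintype.ofFinite _

/-- The loops of a couple of pair-partitions: orbits of the subgroup generated by `a, b`. -/
abbrev Loops {N : ℕ} (a b : Equiv.Perm (Fin N)) : Type :=
  MulAction.orbitRel.Quotient (Subgroup.closure ({a, b} : Set (Equiv.Perm (Fin N)))) (Fin N)

/-- The set of elements of a loop. -/
def loopSet {N : ℕ} {a b : Equiv.Perm (Fin N)} (q : Loops a b) : Set (Fin N) :=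
  MulAction.orbitRel.Quotient.orbit q

/-- Number of loops `|L(a,b)|`. -/
noncomputable def numLoops {N : ℕ} (a b : Equiv.Perm (Fin N)) : ℕ :=
  Nat.card (Loops a b)

/-- The type of a couple of pair-partitions: the multiset of halved loop sizes. -/
noncomputable def loopType {N : ℕ} (a b : Equiv.Perm (Fin N)) : Multiset ℕ :=
  (Finset.univ : Finset (Loops a b)).val.map fun q => Nat.card (loopSet q) / 2

/-- The multiset of cycle lengths (including fixed points) of a permutation. -/
noncomputable def cycleSizes {N : ℕ} (σ : Equiv.Perm (Fin N)) : Multiset ℕ :=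
  (Finset.univ : Finset (MulAction.orbitRel.Quotient
      (Subgroup.closure ({σ} : Set (Equiv.Perm (Fin N)))) (Fin N))).val.map
    fun q => Nat.card (MulAction.orbitRel.Quotient.orbit q)

/-- `z_μ = μ₁μ₂⋯ ∏ᵢ mᵢ(μ)!`. -/
def zMu {n : ℕ} (μ : n.Partition) : ℕ :=
  μ.parts.prod * ∏ i ∈ μ.parts.toFinset, (μ.parts.count i).factorial

/-- The first pair-partition `S`, pairing `2i` with `2i+1` (0-indexed). -/
def firstPP (n : ℕ) : Equiv.Perm (Fin (2 * n)) where
  toFun x := ⟨2 * ((x : ℕ) / 2) + (1 - (x : ℕ) % 2), by have := x.isLt; omega⟩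
  invFun x := ⟨2 * ((x : ℕ) / 2) + (1 - (x : ℕ) % 2), by have := x.isLt; omega⟩
  left_inv x := by
    apply Fin.ext
    have := x.isLt
    simp only [Fin.val_mk]
    omega
  right_inv x := by
    apply Fin.ext
    have := x.isLt
    simp only [Fin.val_mk]
    omega

/-- Row lengths of a partition (weakly decreasing), 0-indexed; `rowLen lam r = λ_{r+1}`. -/
def rowLen {n : ℕ} (lam : n.Partition) (r : ℕ) : ℕ :=
  ((lam.parts.sort (· ≤ ·)).reverse).getD r 0

/-- `f` maps into the boxes of `2λ`; a box is a pair `(row, column)`, both 0-indexed. -/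
def InBoxes2 {M n : ℕ} (lam : n.Partition) (f : Fin M → ℕ × ℕ) : Prop :=
  ∀ l, (f l).2 < 2 * rowLen lam (f l).1

/-- Condition (P0): `f l` and `f (S₀ l)` are neighbors in `2λ`. -/
def P0cond {M : ℕ} (S0 : Equiv.Perm (Fin M)) (f : Fin M → ℕ × ℕ) : Prop :=
  ∀ l, (f (S0 l)).1 = (f l).1 ∧ (f (S0 l)).2 / 2 = (f l).2 / 2 ∧ (f (S0 l)).2 ≠ (f l).2

/-- Condition (P1): `f l` and `f (S₀ (S₁ l))` are in the same column. -/
def P1cond {M : ℕ} (S0 S1 : Equiv.Perm (Fin M)) (f : Fin M → ℕ × ℕ) : Prop :=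
  ∀ l, (f (S0 (S1 l))).2 = (f l).2

/-- Condition (P2): `f l` and `f (S₂ l)` are in the same row. -/
def P2cond {M : ℕ} (S2 : Equiv.Perm (Fin M)) (f : Fin M → ℕ × ℕ) : Prop :=
  ∀ l, (f (S2 l)).1 = (f l).1

/-- `N²_{S₀,S₁,S₂}(λ)`: the number of functions from `[2k]` to the boxes of `2λ`
satisfying (P0), (P1), (P2). -/
noncomputable def N2 {k n : ℕ} (S0 S1 S2 : Equiv.Perm (Fin (2*k))) (lam : n.Partition) : ℕ :=
  Nat.card {f : Fin (2*k) → ℕ × ℕ //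
    InBoxes2 lam f ∧ P0cond S0 f ∧ P1cond S0 S1 f ∧ P2cond S2 f}

/-- `N̂²_{S₀,S₁,S₂}(λ)`: the number of injective such functions. -/
noncomputable def Nhat2 {k n : ℕ} (S0 S1 S2 : Equiv.Perm (Fin (2*k))) (lam : n.Partition) : ℕ :=
  Nat.card {f : Fin (2*k) → ℕ × ℕ //
    Function.Injective f ∧ InBoxes2 lam f ∧ P0cond S0 f ∧ P1cond S0 S1 f ∧ P2cond S2 f}

/-- `N¹_{S₀,S₁,S₂}(λ)`: the number of functions from `[2k]` to the boxes of `λ` such that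
`f∘S₀ = f`, `f(S₁ l)` is in the same column as `f l`, and `f(S₂ l)` is in the same row. -/
noncomputable def N1 {k n : ℕ} (S0 S1 S2 : Equiv.Perm (Fin (2*k))) (lam : n.Partition) : ℕ :=
  Nat.card {f : Fin (2*k) → ℕ × ℕ //
    (∀ l, (f l).2 < rowLen lam (f l).1) ∧ (∀ l, f (S0 l) = f l) ∧
    (∀ l, (f (S1 l)).2 = (f l).2) ∧ (∀ l, (f (S2 l)).1 = (f l).1)}

/-- `T` is the pair-partition `S̃` of `[2n]` obtained from the pair-partition `S` of `[2k]`
by adjoining the pairs `{2k+1, 2k+2}, …, {2n-1, 2n}` (1-indexed). -/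
def ExtendsPP {k n : ℕ} (S : Equiv.Perm (Fin (2*k))) (T : Equiv.Perm (Fin (2*n))) : Prop :=
  (∀ (x : Fin (2*k)) (y : Fin (2*n)), (x : ℕ) = (y : ℕ) → ((T y : ℕ) = (S x : ℕ))) ∧
  (∀ y : Fin (2*n), 2*k ≤ (y : ℕ) → ((T y : ℕ) = 2 * ((y : ℕ)/2) + (1 - (y : ℕ) % 2)))

end ZonalPP

namespace ZonalPP

/-- If `f` (into the boxes of `2λ`) satisfies (P0) and (P1) w.r.t.
`(S₀,S₁)`, `f i = f j`, and `j` is in the orbit of `i` under the subgroup generated by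
`S₀, S₁`, then `j = (S₀∘S₁)^m (i)` for some integer `m` (even distance in the loop). -/
theorem statement11 {k n : ℕ} (S0 S1 : Equiv.Perm (Fin (2*k)))
    (h0 : IsPairPartition S0) (h1 : IsPairPartition S1)
    (lam : Nat.Partition n) (f : Fin (2*k) → ℕ × ℕ)
    (hbox : InBoxes2 lam f) (hP0 : P0cond S0 f) (hP1 : P1cond S0 S1 f)
    (i j : Fin (2*k)) (hf : f i = f j)
    (horb : j ∈ MulAction.orbit
      (Subgroup.closure ({S0, S1} : Set (Equiv.Perm (Fin (2*k))))) i) :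
    ∃ m : ℤ, ((S0 * S1) ^ m) i = j := by
  obtain ⟨g, hg⟩ := horb
  set c := S0 * S1 with hc
  have hS0sq : S0 * S0 = 1 := Equiv.ext fun x => by
    simpa [Equiv.Perm.mul_apply] using h0.1 x
  have hS1sq : S1 * S1 = 1 := Equiv.ext fun x => by
    simpa [Equiv.Perm.mul_apply] using h1.1 x
  have hS0inv : S0⁻¹ = S0 := by
    rw [inv_eq_iff_mul_eq_one, hS0sq]
  have hS1inv : S1⁻¹ = S1 := by
    rw [inv_eq_iff_mul_eq_one, hS1sq]
  have hconj : S0 * c * S0⁻¹ = c⁻¹ := by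
    rw [hS0inv, hc, mul_inv_rev, hS0inv, hS1inv, ← mul_assoc, hS0sq, one_mul]
  have hcm : ∀ m : ℤ, S0 * c ^ m = c ^ (-m) * S0 := by
    intro m
    have h1' : c ^ (-m) = S0 * c ^ m * S0⁻¹ := by
      rw [← conj_zpow, hconj, inv_zpow, ← zpow_neg]
    rw [h1', hS0inv, mul_assoc, hS0sq, mul_one]
  have hdec : ∀ g' ∈ Subgroup.closure ({S0, S1} : Set (Equiv.Perm (Fin (2*k)))),
      ∃ m : ℤ, g' = c ^ m ∨ g' = c ^ m * S0 := by
    intro g' hg'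
    induction hg' using Subgroup.closure_induction with
    | mem x hx =>
      rcases hx with rfl | rfl
      · exact ⟨0, Or.inr (by simp)⟩
      · refine ⟨-1, Or.inr ?_⟩
        rw [zpow_neg_one, hc, mul_inv_rev, hS0inv, hS1inv, mul_assoc, hS0sq, mul_one]
    | one => exact ⟨0, Or.inl (by simp)⟩
    | mul a b _ _ iha ihb =>
      obtain ⟨m, hm⟩ := iha; obtain ⟨m', hm'⟩ := ihb
      rcases hm with rfl | rfl <;> rcases hm' with rfl | rfl
      · exact ⟨m + m', Or.inl (zpow_add c m m').symm⟩
      · exact ⟨m + m', Or.inr (by rw [← mul_assoc, ← zpow_add])⟩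
      · refine ⟨m - m', Or.inr ?_⟩
        rw [mul_assoc, hcm m', ← mul_assoc, ← zpow_add, ← sub_eq_add_neg]
      · refine ⟨m - m', Or.inl ?_⟩
        rw [mul_assoc, ← mul_assoc S0, hcm m', mul_assoc, hS0sq, mul_one,
          ← zpow_add, ← sub_eq_add_neg]
    | inv a _ iha =>
      obtain ⟨m, hm | hm⟩ := iha
      · exact ⟨-m, Or.inl (by rw [hm, ← zpow_neg])⟩
      · refine ⟨m, Or.inr ?_⟩
        rw [hm, mul_inv_rev, hS0inv, ← zpow_neg, hcm (-m), neg_neg]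
  have hcol : ∀ x, (f (c x)).2 = (f x).2 := by
    intro x
    have := hP1 x
    simpa [hc, Equiv.Perm.mul_apply] using this
  have hcolinv : ∀ x, (f (c⁻¹ x)).2 = (f x).2 := by
    intro x
    have := hcol (c⁻¹ x)
    simpa using this.symm
  have hcolz : ∀ (m : ℤ) (x : Fin (2*k)), (f ((c ^ m) x)).2 = (f x).2 := by
    intro m
    induction m using Int.induction_on with
    | zero => simp
    | succ n ih =>
      intro x
      have hx : (c ^ ((n : ℤ) + 1)) x = c ((c ^ (n : ℤ)) x) := by
        rw [add_comm, zpow_add, zpow_one, Equiv.Perm.mul_apply]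
      rw [hx, hcol, ih]
    | pred n ih =>
      intro x
      have hx : (c ^ (-(n : ℤ) - 1)) x = c⁻¹ ((c ^ (-(n : ℤ))) x) := by
        rw [sub_eq_add_neg, add_comm, zpow_add, zpow_neg_one, Equiv.Perm.mul_apply]
      rw [hx, hcolinv, ih]
  obtain ⟨m, hm | hm⟩ := hdec (g : Equiv.Perm (Fin (2*k))) g.2
  · refine ⟨m, ?_⟩
    have : (g : Equiv.Perm (Fin (2*k))) i = j := hg
    rw [hm] at this
    exact this
  · exfalso
    have hji : (g : Equiv.Perm (Fin (2*k))) i = j := hg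
    rw [hm, Equiv.Perm.mul_apply] at hji
    have h1' : (f j).2 = (f (S0 i)).2 := by rw [← hji, hcolz]
    have h2' : (f (S0 i)).2 ≠ (f i).2 := (hP0 i).2.2
    exact h2' (by rw [← h1', ← hf])

end ZonalPP
end

section
/- Let S₀, S₁, S₂ be pair-partitions of [2k], let λ be a partition, and let f be a function from {1,…,2k} to the boxes of 2λ with f(i) = f(j) for some i ≠ j. Set S₀′ = (i j)∘S₀∘(i j), where (i j) is the transposition exchanging i and j. Then f satisfies conditions (P0), (P1) and (P2) with respect to (S₀,S₁,S₂) if and only if f satisfies them with respect to (S₀′,S₁,S₂). -/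
open scoped BigOperators

namespace ZonalPP

/-- For a function `f` into the boxes of `2λ` with `f i = f j` (`i ≠ j`)
and `S₀' = (i j)∘S₀∘(i j)`, `f` satisfies (P0),(P1),(P2) w.r.t. `(S₀,S₁,S₂)` iff it
satisfies them w.r.t. `(S₀',S₁,S₂)`. -/
theorem statement12 {k n : ℕ} (S0 S1 S2 : Equiv.Perm (Fin (2*k)))
    (h0 : IsPairPartition S0) (h1 : IsPairPartition S1) (h2 : IsPairPartition S2)
    (lam : Nat.Partition n) (f : Fin (2*k) → ℕ × ℕ) (hbox : InBoxes2 lam f)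
    (i j : Fin (2*k)) (hij : i ≠ j) (hf : f i = f j) :
    (P0cond S0 f ∧ P1cond S0 S1 f ∧ P2cond S2 f) ↔
      (P0cond (Equiv.swap i j * S0 * Equiv.swap i j) f ∧
        P1cond (Equiv.swap i j * S0 * Equiv.swap i j) S1 f ∧ P2cond S2 f) := by
  have hsw : ∀ x, f (Equiv.swap i j x) = f x := by
    intro x
    rcases eq_or_ne x i with rfl | hxi
    · rw [Equiv.swap_apply_left]; exact hf.symm
    rcases eq_or_ne x j with rfl | hxj
    · rw [Equiv.swap_apply_right]; exact hf
    · rw [Equiv.swap_apply_of_ne_of_ne hxi hxj]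
  have key : ∀ S : Equiv.Perm (Fin (2*k)), P0cond S f → f (S i) = f (S j) := by
    intro S hP0
    obtain ⟨r1, c1, d1⟩ := hP0 i
    obtain ⟨r2, c2, d2⟩ := hP0 j
    rw [hf] at r1 c1 d1
    apply Prod.ext
    · rw [r1, r2]
    · omega
  have happ : ∀ x, f ((Equiv.swap i j * S0 * Equiv.swap i j) x)
      = f (S0 (Equiv.swap i j x)) := by
    intro x
    simp only [Equiv.Perm.mul_apply]
    exact hsw _
  have main : ∀ (h : f (S0 i) = f (S0 j)) x,
      f ((Equiv.swap i j * S0 * Equiv.swap i j) x) = f (S0 x) := by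
    intro h x
    rw [happ]
    rcases eq_or_ne x i with rfl | hxi
    · rw [Equiv.swap_apply_left]; exact h.symm
    rcases eq_or_ne x j with rfl | hxj
    · rw [Equiv.swap_apply_right]; exact h
    · rw [Equiv.swap_apply_of_ne_of_ne hxi hxj]
  constructor
  · rintro ⟨p0, p1, p2⟩
    have hm := main (key S0 p0)
    refine ⟨fun l => by rw [hm]; exact p0 l, fun l => by rw [hm]; exact p1 l, p2⟩
  · rintro ⟨p0, p1, p2⟩
    have hk : f (S0 i) = f (S0 j) := by
      have := key _ p0
      rw [happ, happ, Equiv.swap_apply_left, Equiv.swap_apply_right] at this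
      exact this.symm
    have hm := main hk
    refine ⟨fun l => by rw [← hm]; exact p0 l, fun l => by rw [← hm]; exact p1 l, p2⟩

end ZonalPP
end

section
/- Let S₀, S₁, S₂ be pair-partitions of [2k], let λ be a partition, and suppose there exists a function f from {1,…,2k} to the boxes of 2λ satisfying (P0), (P1), (P2) with respect to (S₀,S₁,S₂) and such that f(i) = f(j) for some i ≠ j. Set S₀′ = (i j)∘S₀∘(i j). Then the number of orbits of the subgroup generated by S₀′ and S₁ differs from the number of orbits of the subgroup generated by S₀ and S₁ by exactly one; consequently (−1)^{|L(S₀,S₁)|} + (−1)^{|L(S₀′,S₁)|} = 0. -/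
open scoped BigOperators

namespace ZonalPP

open Equiv Equiv.Perm MulAction Subgroup Finset

variable {N : ℕ}

/-- Orbit count of the closure of a set of permutations of `Fin N`. -/
noncomputable def oc (s : Set (Equiv.Perm (Fin N))) : ℕ :=
  Nat.card (MulAction.orbitRel.Quotient (Subgroup.closure s) (Fin N))

lemma oc_congr {s t : Set (Equiv.Perm (Fin N))} (h : Subgroup.closure s = Subgroup.closure t) :
    oc s = oc t := by
  unfold oc
  rw [h]

lemma mk_eq_iff (s : Set (Equiv.Perm (Fin N))) (x y : Fin N) :
    (Quotient.mk'' x : MulAction.orbitRel.Quotient (Subgroup.closure s) (Fin N)) =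
        Quotient.mk'' y ↔ ∃ g ∈ Subgroup.closure s, g y = x := by
  rw [Quotient.eq'']
  rw [MulAction.orbitRel_apply, MulAction.mem_orbit_iff]
  constructor
  · rintro ⟨⟨g, hg⟩, hgy⟩
    exact ⟨g, hg, hgy⟩
  · rintro ⟨g, hg, hgy⟩
    exact ⟨⟨g, hg⟩, hgy⟩

lemma mk_single_eq_iff (σ : Equiv.Perm (Fin N)) (x y : Fin N) :
    (Quotient.mk'' x : MulAction.orbitRel.Quotient
        (Subgroup.closure ({σ} : Set (Equiv.Perm (Fin N)))) (Fin N)) =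
        Quotient.mk'' y ↔ σ.SameCycle x y := by
  rw [mk_eq_iff]
  constructor
  · rintro ⟨g, hg, hgy⟩
    obtain ⟨m, rfl⟩ := Subgroup.mem_closure_singleton.mp hg
    exact Equiv.Perm.SameCycle.symm ⟨m, hgy⟩
  · rintro h
    obtain ⟨m, hm⟩ := h.symm
    exact ⟨σ ^ m, Subgroup.mem_closure_singleton.mpr ⟨m, rfl⟩, hm⟩

/-- Generic fiber-counting lemma. -/
lemma card_fiber_sum {α β : Type*} [Fintype α] [Fintype β] [DecidableEq β]
    (g : α → β) (c : β → ℕ)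
    (h : ∀ b, (Finset.univ.filter fun a => g a = b).card = c b) :
    Fintype.card α = ∑ b, c b := by
  rw [← Finset.card_univ,
    Finset.card_eq_sum_card_fiberwise (f := g) (t := Finset.univ) (fun x _ => Finset.mem_univ _)]
  exact Finset.sum_congr rfl fun b _ => h b

lemma filter_card_one {α β : Type*} [Fintype α] [DecidableEq β] (g : α → β) (b : β) (a0 : α)
    (h : ∀ a, g a = b ↔ a = a0) :
    (Finset.univ.filter fun a => g a = b).card = 1 := by
  have : (Finset.univ.filter fun a => g a = b) = {a0} := by
    ext a; simp [h a]
  rw [this, Finset.card_singleton]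

lemma filter_card_two {α β : Type*} [Fintype α] [DecidableEq α] [DecidableEq β]
    (g : α → β) (b : β) (a0 a1 : α) (hne : a0 ≠ a1)
    (h : ∀ a, g a = b ↔ a = a0 ∨ a = a1) :
    (Finset.univ.filter fun a => g a = b).card = 2 := by
  have : (Finset.univ.filter fun a => g a = b) = {a0, a1} := by
    ext a; simp [h a]
  rw [this, Finset.card_pair hne]

/-- The natural map between orbit quotients when one closure is contained in the other. -/
noncomputable def qmap {s t : Set (Equiv.Perm (Fin N))}
    (hst : Subgroup.closure s ≤ Subgroup.closure t) :
    MulAction.orbitRel.Quotient (Subgroup.closure s) (Fin N) →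
      MulAction.orbitRel.Quotient (Subgroup.closure t) (Fin N) :=
  Quotient.map' id (by
    intro a b hab
    rw [MulAction.orbitRel_apply, MulAction.mem_orbit_iff] at hab ⊢
    obtain ⟨⟨g, hg⟩, hgy⟩ := hab
    exact ⟨⟨g, hst hg⟩, hgy⟩)

lemma qmap_mk {s t : Set (Equiv.Perm (Fin N))}
    (hst : Subgroup.closure s ≤ Subgroup.closure t) (x : Fin N) :
    qmap hst (Quotient.mk'' x) = Quotient.mk'' x :=
  rfl

section Rel2

variable (σ : Equiv.Perm (Fin N)) (x y : Fin N)

/-- The orbit relation of `⟨σ, (x y)⟩` in terms of cycles of `σ`. -/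
def Rel2 (w z : Fin N) : Prop :=
  σ.SameCycle w z ∨ ((σ.SameCycle x w ∨ σ.SameCycle y w) ∧ (σ.SameCycle x z ∨ σ.SameCycle y z))

variable {σ x y}

lemma Rel2.refl (w : Fin N) : Rel2 σ x y w w := Or.inl (SameCycle.refl σ w)

lemma Rel2.symm {w z : Fin N} (h : Rel2 σ x y w z) : Rel2 σ x y z w := by
  rcases h with h | ⟨h1, h2⟩
  · exact Or.inl h.symm
  · exact Or.inr ⟨h2, h1⟩

lemma Rel2.trans {u v w : Fin N} (h : Rel2 σ x y u v) (h' : Rel2 σ x y v w) :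
    Rel2 σ x y u w := by
  rcases h with h | ⟨h1, h2⟩ <;> rcases h' with h' | ⟨h1', h2'⟩
  · exact Or.inl (h.trans h')
  · refine Or.inr ⟨?_, h2'⟩
    rcases h1' with hh | hh
    · exact Or.inl (hh.trans h.symm)
    · exact Or.inr (hh.trans h.symm)
  · refine Or.inr ⟨h1, ?_⟩
    rcases h2 with hh | hh
    · exact Or.inl (hh.trans h')
    · exact Or.inr (hh.trans h')
  · exact Or.inr ⟨h1, h2'⟩

variable (σ x y)

/-- The subgroup of permutations all of whose moves respect `Rel2`. -/
def rel2Subgroup : Subgroup (Equiv.Perm (Fin N)) where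
  carrier := {g | ∀ z, Rel2 σ x y (g z) z}
  one_mem' := fun z => Rel2.refl z
  mul_mem' := by
    intro p q hp hq z
    exact (hp (q z)).trans (hq z)
  inv_mem' := by
    intro p hp z
    have h := hp (p⁻¹ z)
    rw [show p (p⁻¹ z) = z from p.apply_symm_apply z] at h
    exact h.symm

lemma mkJ_eq_iff (w z : Fin N) :
    (Quotient.mk'' w : MulAction.orbitRel.Quotient
        (Subgroup.closure ({σ, Equiv.swap x y} : Set (Equiv.Perm (Fin N)))) (Fin N)) =
        Quotient.mk'' z ↔ Rel2 σ x y w z := by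
  rw [mk_eq_iff]
  constructor
  · rintro ⟨g, hg, rfl⟩
    have hle : Subgroup.closure ({σ, Equiv.swap x y} : Set (Equiv.Perm (Fin N))) ≤
        rel2Subgroup σ x y := by
      rw [Subgroup.closure_le]
      rintro p (rfl | rfl)
      · intro z
        exact Or.inl ((SameCycle.refl _ z).apply_left)
      · intro z
        by_cases hzx : z = x
        · subst hzx
          rw [Equiv.swap_apply_left]
          exact Or.inr ⟨Or.inr (SameCycle.refl σ y), Or.inl (SameCycle.refl σ z)⟩
        by_cases hzy : z = y
        · subst hzy
          rw [Equiv.swap_apply_right]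
          exact Or.inr ⟨Or.inl (SameCycle.refl σ x), Or.inr (SameCycle.refl σ z)⟩
        rw [Equiv.swap_apply_of_ne_of_ne hzx hzy]
        exact Rel2.refl z
    exact hle hg z
  · have hmem_σ : σ ∈ Subgroup.closure ({σ, Equiv.swap x y} : Set (Equiv.Perm (Fin N))) :=
      Subgroup.subset_closure (Set.mem_insert _ _)
    have hmem_τ : Equiv.swap x y ∈
        Subgroup.closure ({σ, Equiv.swap x y} : Set (Equiv.Perm (Fin N))) :=
      Subgroup.subset_closure (Set.mem_insert_of_mem _ rfl)
    have hsc : ∀ u v : Fin N, σ.SameCycle u v →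
        ∃ g ∈ Subgroup.closure ({σ, Equiv.swap x y} : Set (Equiv.Perm (Fin N))), g v = u := by
      intro u v h
      obtain ⟨m, hm⟩ := h.symm
      exact ⟨σ ^ m, Subgroup.zpow_mem _ hmem_σ m, hm⟩
    rintro (h | ⟨h1, h2⟩)
    · exact hsc w z h
    · have hxy : ∃ g ∈ Subgroup.closure ({σ, Equiv.swap x y} : Set (Equiv.Perm (Fin N))),
          g y = x := ⟨Equiv.swap x y, hmem_τ, Equiv.swap_apply_right x y⟩
      have comp : ∀ {u v w' : Fin N},
          (∃ g ∈ Subgroup.closure ({σ, Equiv.swap x y} : Set (Equiv.Perm (Fin N))), g v = u) →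
          (∃ g ∈ Subgroup.closure ({σ, Equiv.swap x y} : Set (Equiv.Perm (Fin N))), g w' = v) →
          ∃ g ∈ Subgroup.closure ({σ, Equiv.swap x y} : Set (Equiv.Perm (Fin N))), g w' = u := by
        rintro u v w' ⟨g1, hg1, rfl⟩ ⟨g2, hg2, rfl⟩
        exact ⟨g1 * g2, mul_mem hg1 hg2, rfl⟩
      have inv : ∀ {u v : Fin N},
          (∃ g ∈ Subgroup.closure ({σ, Equiv.swap x y} : Set (Equiv.Perm (Fin N))), g v = u) →
          ∃ g ∈ Subgroup.closure ({σ, Equiv.swap x y} : Set (Equiv.Perm (Fin N))), g u = v := by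
        rintro u v ⟨g, hg, rfl⟩
        exact ⟨g⁻¹, inv_mem hg, g.symm_apply_apply v⟩
      -- w is connected to x, z is connected to x
      have hwx : ∃ g ∈ Subgroup.closure ({σ, Equiv.swap x y} : Set (Equiv.Perm (Fin N))),
          g x = w := by
        rcases h1 with hh | hh
        · exact inv (hsc x w hh)
        · exact comp (inv (hsc y w hh)) (inv hxy)
      have hzx : ∃ g ∈ Subgroup.closure ({σ, Equiv.swap x y} : Set (Equiv.Perm (Fin N))),
          g x = z := by
        rcases h2 with hh | hh
        · exact inv (hsc x z hh)
        · exact comp (inv (hsc y z hh)) (inv hxy)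
      exact comp hwx (inv hzx)

end Rel2

/-- Splitting/merging a cycle: orbit count of `σ` vs orbit count of `⟨σ, (x y)⟩`. -/
lemma cyc_closure_pair (σ : Equiv.Perm (Fin N)) (x y : Fin N) :
    oc {σ} = oc {σ, Equiv.swap x y} + (if σ.SameCycle x y then 0 else 1) := by
  classical
  set J : Set (Equiv.Perm (Fin N)) := {σ, Equiv.swap x y} with hJ
  have hle : Subgroup.closure ({σ} : Set (Equiv.Perm (Fin N))) ≤ Subgroup.closure J :=
    Subgroup.closure_mono (by intro g hg; rw [hg]; exact Set.mem_insert _ _)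
  set g := qmap hle with hg
  set c : MulAction.orbitRel.Quotient (Subgroup.closure J) (Fin N) → ℕ :=
    fun q => if (¬ σ.SameCycle x y) ∧ q = Quotient.mk'' x then 2 else 1 with hc
  have hfib : ∀ q, (Finset.univ.filter fun p => g p = q).card = c q := by
    intro q
    induction q using Quotient.inductionOn' with
    | h z =>
      by_cases hz : σ.SameCycle x z ∨ σ.SameCycle y z
      · -- fiber is {mk x, mk y}
        have hmem : ∀ w : Fin N, (g (Quotient.mk'' w) = Quotient.mk'' z) ↔
            (σ.SameCycle x w ∨ σ.SameCycle y w) := by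
          intro w
          rw [hg, qmap_mk, mkJ_eq_iff]
          constructor
          · rintro (h | ⟨h1, _⟩)
            · rcases hz with hh | hh
              · exact Or.inl (hh.trans h.symm)
              · exact Or.inr (hh.trans h.symm)
            · exact h1
          · intro h
            exact Or.inr ⟨h, hz⟩
        have hqmkx : (Quotient.mk'' z : MulAction.orbitRel.Quotient
            (Subgroup.closure J) (Fin N)) = Quotient.mk'' x := by
          rw [mkJ_eq_iff]
          exact Or.inr ⟨hz, Or.inl (SameCycle.refl σ x)⟩
        by_cases hsc : σ.SameCycle x y
        · have : ∀ p, g p = Quotient.mk'' z ↔ p = Quotient.mk'' x := by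
            intro p
            induction p using Quotient.inductionOn' with
            | h w =>
              rw [hmem w, mk_single_eq_iff]
              constructor
              · rintro (h | h)
                · exact h.symm
                · exact (hsc.trans h).symm
              · intro h; exact Or.inl h.symm
          rw [filter_card_one g _ _ this, hc]
          dsimp only
          have hnot2 : ¬ ((¬ σ.SameCycle x y) ∧
              (Quotient.mk'' z : MulAction.orbitRel.Quotient
                (Subgroup.closure J) (Fin N)) = Quotient.mk'' x) := fun h => h.1 hsc
          rw [if_neg hnot2]
        · have hne : (Quotient.mk'' x : MulAction.orbitRel.Quotient
              (Subgroup.closure ({σ} : Set (Equiv.Perm (Fin N)))) (Fin N)) ≠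
              Quotient.mk'' y := by
            rw [Ne, mk_single_eq_iff]
            exact hsc
          have : ∀ p, g p = Quotient.mk'' z ↔
              (p = Quotient.mk'' x ∨ p = Quotient.mk'' y) := by
            intro p
            induction p using Quotient.inductionOn' with
            | h w =>
              rw [hmem w, mk_single_eq_iff, mk_single_eq_iff]
              constructor
              · rintro (h | h)
                · exact Or.inl h.symm
                · exact Or.inr h.symm
              · rintro (h | h)
                · exact Or.inl h.symm
                · exact Or.inr h.symm
          rw [filter_card_two g _ _ _ hne this, hc]
          dsimp only
          rw [if_pos ⟨hsc, hqmkx⟩]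
      · -- fiber is {mk z}
        push_neg at hz
        have : ∀ p, g p = Quotient.mk'' z ↔ p = Quotient.mk'' z := by
          intro p
          induction p using Quotient.inductionOn' with
          | h w =>
            rw [hg, qmap_mk, mkJ_eq_iff, mk_single_eq_iff]
            constructor
            · rintro (h | ⟨_, h2⟩)
              · exact h
              · rcases h2 with hh | hh
                · exact absurd hh hz.1
                · exact absurd hh hz.2
            · intro h; exact Or.inl h
        rw [filter_card_one g _ _ this, hc]
        dsimp only
        have hnot : ¬ ((¬ σ.SameCycle x y) ∧
            (Quotient.mk'' z : MulAction.orbitRel.Quotient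
              (Subgroup.closure J) (Fin N)) = Quotient.mk'' x) := by
          rintro ⟨-, hzx⟩
          rw [mkJ_eq_iff] at hzx
          rcases hzx with h | ⟨h1, -⟩
          · exact hz.1 h.symm
          · rcases h1 with hh | hh
            · exact hz.1 hh
            · exact hz.2 hh
        rw [if_neg hnot]
  have hcard := card_fiber_sum g c hfib
  have hocσ : oc ({σ} : Set (Equiv.Perm (Fin N))) = Fintype.card
      (MulAction.orbitRel.Quotient (Subgroup.closure ({σ} : Set (Equiv.Perm (Fin N)))) (Fin N)) :=
    Nat.card_eq_fintype_card
  have hocJ : oc J = Fintype.card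
      (MulAction.orbitRel.Quotient (Subgroup.closure J) (Fin N)) :=
    Nat.card_eq_fintype_card
  rw [hocσ, hocJ, hcard]
  by_cases hsc : σ.SameCycle x y
  · simp only [hc, hsc, not_true, false_and, if_false, if_pos hsc]
    simp [Finset.card_univ]
  · simp only [hc, hsc, not_false_iff, true_and, if_neg hsc]
    have : ∀ q : MulAction.orbitRel.Quotient (Subgroup.closure J) (Fin N),
        (if q = Quotient.mk'' x then 2 else 1) = 1 + (if q = Quotient.mk'' x then 1 else 0) := by
      intro q; by_cases h : q = Quotient.mk'' x <;> simp [h]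
    rw [Finset.sum_congr rfl fun q _ => this q, Finset.sum_add_distrib]
    simp [Finset.card_univ]

end ZonalPP
namespace ZonalPP

open Equiv Equiv.Perm MulAction Subgroup Finset

variable {N : ℕ}

lemma not_sameCycle_swap_mul (σ : Equiv.Perm (Fin N)) {x y : Fin N} (hxy : x ≠ y)
    (h : σ.SameCycle x y) : ¬ (Equiv.swap x y * σ).SameCycle x y := by
  have hex : ∃ n, 0 < n ∧ (σ ^ n) x = y := by
    obtain ⟨n, hn0, -, hn⟩ := h.exists_pow_eq''
    exact ⟨n, hn0, hn⟩
  set n := Nat.find hex with hn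
  have hspec : 0 < n ∧ (σ ^ n) x = y := Nat.find_spec hex
  have hmin : ∀ m, m < n → ¬ (0 < m ∧ (σ ^ m) x = y) := fun m hm => Nat.find_min hex hm
  set A : Set (Fin N) := {u | ∃ t, t < n ∧ (σ ^ t) x = u} with hA
  have hxA : x ∈ A := ⟨0, hspec.1, by simp⟩
  have hyA : y ∉ A := by
    rintro ⟨t, htn, hty⟩
    rcases Nat.eq_zero_or_pos t with rfl | ht
    · simp only [pow_zero, Equiv.Perm.one_apply] at hty
      exact hxy hty
    · exact hmin t htn ⟨ht, hty⟩
  have hstep : ∀ u ∈ A, (Equiv.swap x y * σ) u ∈ A := by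
    rintro u ⟨t, htn, rfl⟩
    have he : (Equiv.swap x y * σ) ((σ ^ t) x) = Equiv.swap x y ((σ ^ (t+1)) x) := by
      rw [pow_succ', Equiv.Perm.mul_apply, Equiv.Perm.mul_apply]
    by_cases hn1 : t + 1 = n
    · have hy' : (σ ^ (t+1)) x = y := by rw [hn1]; exact hspec.2
      rw [he, hy', Equiv.swap_apply_right]
      exact hxA
    · have htn1 : t + 1 < n := by omega
      have h1 : (σ ^ (t+1)) x ≠ y := fun he' => hmin (t+1) htn1 ⟨Nat.succ_pos t, he'⟩
      have h2 : (σ ^ (t+1)) x ≠ x := by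
        intro he'
        have key : (σ ^ (n - (t+1))) x = y := by
          have e2 : (σ ^ n) x = (σ ^ (n - (t+1))) ((σ ^ (t+1)) x) := by
            have hnn : n - (t+1) + (t+1) = n := by omega
            rw [← Equiv.Perm.mul_apply, ← pow_add, hnn]
          rw [he'] at e2
          rw [← e2]
          exact hspec.2
        exact hmin (n - (t+1)) (by omega) ⟨by omega, key⟩
      rw [he, Equiv.swap_apply_of_ne_of_ne h2 h1]
      exact ⟨t+1, htn1, rfl⟩
  have hiter : ∀ s : ℕ, ((Equiv.swap x y * σ) ^ s) x ∈ A := by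
    intro s
    induction s with
    | zero => simpa using hxA
    | succ s ih =>
      have : ((Equiv.swap x y * σ) ^ (s+1)) x
          = (Equiv.swap x y * σ) (((Equiv.swap x y * σ) ^ s) x) := by
        rw [pow_succ', Equiv.Perm.mul_apply]
      rw [this]
      exact hstep _ ih
  intro hcon
  obtain ⟨m, -, -, hm⟩ := hcon.exists_pow_eq''
  exact hyA (hm ▸ hiter m)

lemma sameCycle_swap_mul_of_not (σ : Equiv.Perm (Fin N)) {x y : Fin N} (hxy : x ≠ y)
    (h : ¬ σ.SameCycle x y) : (Equiv.swap x y * σ).SameCycle x y := by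
  have hex : ∃ n, 0 < n ∧ (σ ^ n) x = x := by
    refine ⟨orderOf σ, orderOf_pos σ, ?_⟩
    rw [pow_orderOf_eq_one]
    rfl
  set n := Nat.find hex with hn
  have hspec : 0 < n ∧ (σ ^ n) x = x := Nat.find_spec hex
  have hmin : ∀ m, m < n → ¬ (0 < m ∧ (σ ^ m) x = x) := fun m hm => Nat.find_min hex hm
  have key : ∀ t, t < n → ((Equiv.swap x y * σ) ^ t) x = (σ ^ t) x := by
    intro t
    induction t with
    | zero => intro _; simp
    | succ t ih =>
      intro htn
      have ht : t < n := by omega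
      have h1 : (σ ^ (t+1)) x ≠ x := fun he => hmin (t+1) htn ⟨Nat.succ_pos t, he⟩
      have h2 : (σ ^ (t+1)) x ≠ y := fun he => h ⟨((t+1 : ℕ) : ℤ), by rw [zpow_natCast]; exact he⟩
      have e1 : ((Equiv.swap x y * σ) ^ (t+1)) x = Equiv.swap x y ((σ ^ (t+1)) x) := by
        simp only [pow_succ', Equiv.Perm.mul_apply]
        rw [ih ht]
      rw [e1]
      exact Equiv.swap_apply_of_ne_of_ne h1 h2
  have hy : ((Equiv.swap x y * σ) ^ n) x = y := by
    have hn1 : n - 1 < n := by omega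
    have e1 : ((Equiv.swap x y * σ) ^ n) x
        = (Equiv.swap x y * σ) (((Equiv.swap x y * σ) ^ (n-1)) x) := by
      conv_lhs => rw [show n = (n-1)+1 by omega, pow_succ', Equiv.Perm.mul_apply]
    have e2 : σ ((σ ^ (n-1)) x) = x := by
      have h3 : (σ ^ ((n-1)+1)) x = x := by
        rw [Nat.sub_add_cancel hspec.1]
        exact hspec.2
      rw [pow_succ', Equiv.Perm.mul_apply] at h3
      exact h3
    rw [e1, key (n-1) hn1, Equiv.Perm.mul_apply, e2, Equiv.swap_apply_left]
  exact ⟨(n : ℤ), by rw [zpow_natCast]; exact hy⟩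

lemma agree_pow (σ : Equiv.Perm (Fin N)) {a b z : Fin N}
    (ha : ¬ σ.SameCycle z a) (hb : ¬ σ.SameCycle z b) :
    ∀ t : ℕ, ((Equiv.swap a b * σ) ^ t) z = (σ ^ t) z := by
  intro t
  induction t with
  | zero => simp
  | succ t ih =>
    have h1 : (σ ^ (t+1)) z ≠ a := fun he => ha ⟨((t+1 : ℕ) : ℤ), by rw [zpow_natCast]; exact he⟩
    have h2 : (σ ^ (t+1)) z ≠ b := fun he => hb ⟨((t+1 : ℕ) : ℤ), by rw [zpow_natCast]; exact he⟩
    have e1 : ((Equiv.swap a b * σ) ^ (t+1)) z = Equiv.swap a b ((σ ^ (t+1)) z) := by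
      simp only [pow_succ', Equiv.Perm.mul_apply]
      rw [ih]
    rw [e1]
    exact Equiv.swap_apply_of_ne_of_ne h1 h2

lemma sameCycle_swap_mul_of_sameCycle (σ : Equiv.Perm (Fin N)) {a b z w : Fin N}
    (ha : ¬ σ.SameCycle z a) (hb : ¬ σ.SameCycle z b)
    (h : σ.SameCycle z w) : (Equiv.swap a b * σ).SameCycle z w := by
  obtain ⟨m, -, hm⟩ := h.exists_pow_eq'
  exact ⟨(m : ℤ), by rw [zpow_natCast, agree_pow σ ha hb m]; exact hm⟩

lemma sameCycle_col_eq {σ : Equiv.Perm (Fin N)} {col : Fin N → ℕ}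
    (hcol : ∀ u, col (σ u) = col u) {u v : Fin N} (h : σ.SameCycle u v) : col u = col v := by
  obtain ⟨m, -, hm⟩ := h.exists_pow_eq'
  subst hm
  clear h
  induction m with
  | zero => simp
  | succ m ih =>
    rw [pow_succ', Equiv.Perm.mul_apply, hcol]
    exact ih

lemma closure_pair_swap (σ : Equiv.Perm (Fin N)) (x y : Fin N) :
    Subgroup.closure ({σ, Equiv.swap x y} : Set (Equiv.Perm (Fin N))) =
      Subgroup.closure ({Equiv.swap x y * σ, Equiv.swap x y} : Set (Equiv.Perm (Fin N))) := by
  apply le_antisymm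
  · rw [Subgroup.closure_le]
    intro p hp
    simp only [Set.mem_insert_iff, Set.mem_singleton_iff] at hp
    rcases hp with h | h
    · rw [h]
      have hm : Equiv.swap x y * (Equiv.swap x y * σ) ∈
          Subgroup.closure ({Equiv.swap x y * σ, Equiv.swap x y} :
            Set (Equiv.Perm (Fin N))) :=
        mul_mem (Subgroup.subset_closure (Set.mem_insert_of_mem _ rfl))
          (Subgroup.subset_closure (Set.mem_insert _ _))
      rwa [← mul_assoc, Equiv.swap_mul_self, one_mul] at hm
    · rw [h]
      exact Subgroup.subset_closure (Set.mem_insert_of_mem _ rfl)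
  · rw [Subgroup.closure_le]
    intro p hp
    simp only [Set.mem_insert_iff, Set.mem_singleton_iff] at hp
    rcases hp with h | h
    · rw [h]
      exact mul_mem (Subgroup.subset_closure (Set.mem_insert_of_mem _ rfl))
        (Subgroup.subset_closure (Set.mem_insert _ _))
    · rw [h]
      exact Subgroup.subset_closure (Set.mem_insert_of_mem _ rfl)

lemma oc_swap_mul_of_sameCycle (σ : Equiv.Perm (Fin N)) {x y : Fin N} (hxy : x ≠ y)
    (h : σ.SameCycle x y) : oc {Equiv.swap x y * σ} = oc {σ} + 1 := by
  have e1 := cyc_closure_pair σ x y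
  have e2 := cyc_closure_pair (Equiv.swap x y * σ) x y
  rw [if_pos h] at e1
  rw [if_neg (not_sameCycle_swap_mul σ hxy h)] at e2
  rw [oc_congr (closure_pair_swap σ x y)] at e1
  omega

lemma oc_swap_mul_of_not_sameCycle (σ : Equiv.Perm (Fin N)) {x y : Fin N} (hxy : x ≠ y)
    (h : ¬ σ.SameCycle x y) : oc {σ} = oc {Equiv.swap x y * σ} + 1 := by
  have e1 := cyc_closure_pair σ x y
  have e2 := cyc_closure_pair (Equiv.swap x y * σ) x y
  rw [if_neg h] at e1
  rw [if_pos (sameCycle_swap_mul_of_not σ hxy h)] at e2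
  rw [oc_congr (closure_pair_swap σ x y)] at e1
  omega

lemma oc_mul_eq_two_mul_numLoops (a b : Equiv.Perm (Fin N))
    (ha : IsPairPartition a) (hb : IsPairPartition b) :
    oc {a * b} = 2 * numLoops a b := by
  classical
  have haa : a * a = 1 := Equiv.ext fun x => ha.1 x
  have hainv : a⁻¹ = a := inv_eq_of_mul_eq_one_right haa
  have hbinv : b⁻¹ = b := inv_eq_of_mul_eq_one_right (Equiv.ext fun x => hb.1 x)
  set π : Equiv.Perm (Fin N) := a * b with hπdef
  have hconj : a * π * a⁻¹ = π⁻¹ := by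
    rw [hπdef, mul_inv_rev, hbinv, hainv, ← mul_assoc, haa, one_mul]
  have h2 : ∀ m : ℤ, a * π ^ m = π ^ (-m) * a := by
    intro m
    have h3 := map_zpow (MulAut.conj a) π m
    simp only [MulAut.conj_apply] at h3
    rw [hconj, inv_zpow, ← zpow_neg] at h3
    rw [← h3, inv_mul_cancel_right]
  have h2' : ∀ m : ℤ, π ^ m * a = a * π ^ (-m) := by
    intro m
    have h4 := (h2 (-m)).symm
    rwa [neg_neg] at h4
  have hab1 : a * π = b := by
    rw [hπdef, ← mul_assoc, haa, one_mul]
  have hNF : ∀ g ∈ Subgroup.closure ({a, b} : Set (Equiv.Perm (Fin N))),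
      ∃ m : ℤ, g = π ^ m ∨ g = a * π ^ m := by
    intro g hg
    let K : Subgroup (Equiv.Perm (Fin N)) :=
      { carrier := {g | ∃ m : ℤ, g = π ^ m ∨ g = a * π ^ m}
        one_mem' := ⟨0, Or.inl (by rw [zpow_zero])⟩
        mul_mem' := by
          rintro p q ⟨m, rfl | rfl⟩ ⟨m', rfl | rfl⟩
          · exact ⟨m + m', Or.inl (zpow_add π m m').symm⟩
          · refine ⟨-m + m', Or.inr ?_⟩
            rw [← mul_assoc, h2' m, mul_assoc, ← zpow_add]
          · exact ⟨m + m', Or.inr (by rw [mul_assoc, ← zpow_add])⟩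
          · refine ⟨-m + m', Or.inl ?_⟩
            rw [mul_assoc, ← mul_assoc (π ^ m) a, h2' m, mul_assoc a, ← mul_assoc a a, haa,
              one_mul, ← zpow_add]
        inv_mem' := by
          rintro p ⟨m, rfl | rfl⟩
          · exact ⟨-m, Or.inl (by rw [zpow_neg])⟩
          · refine ⟨m, Or.inr ?_⟩
            rw [mul_inv_rev, hainv, ← zpow_neg, h2' (-m), neg_neg] }
    have hle : Subgroup.closure ({a, b} : Set (Equiv.Perm (Fin N))) ≤ K := by
      rw [Subgroup.closure_le]
      intro p hp
      simp only [Set.mem_insert_iff, Set.mem_singleton_iff] at hp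
      rcases hp with h | h
      · exact ⟨0, Or.inr (by rw [h, zpow_zero, mul_one])⟩
      · exact ⟨1, Or.inr (by rw [h, zpow_one, hab1])⟩
    exact hle hg
  have hfix : ∀ z : Fin N, ¬ π.SameCycle z (a z) := by
    rintro z ⟨m, hm⟩
    rcases Int.even_or_odd m with ⟨t, ht⟩ | ⟨t, ht⟩
    · apply ha.2 ((π ^ t) z)
      have e1 : a ((π ^ t) z) = (π ^ (-t)) (a z) := by
        rw [← Equiv.Perm.mul_apply, h2 t, Equiv.Perm.mul_apply]
      rw [e1, ← hm, ← Equiv.Perm.mul_apply, ← zpow_add, ht,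
        show -t + (t + t) = t from by ring]
    · apply hb.2 ((π ^ t) z)
      have e0 : b ((π ^ t) z) = a ((π ^ (1 + t)) z) := by
        rw [← hab1, Equiv.Perm.mul_apply, ← Equiv.Perm.mul_apply π, ← zpow_one_add]
      have e1 : a ((π ^ (1 + t)) z) = (π ^ (-(1 + t))) (a z) := by
        rw [← Equiv.Perm.mul_apply, h2 (1 + t), Equiv.Perm.mul_apply]
      rw [e0, e1, ← hm, ← Equiv.Perm.mul_apply, ← zpow_add, ht,
        show -(1 + t) + (2 * t + 1) = t from by ring]
  have hmemπ : π ∈ Subgroup.closure ({a, b} : Set (Equiv.Perm (Fin N))) := by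
    rw [hπdef]
    exact mul_mem (Subgroup.subset_closure (Set.mem_insert _ _))
      (Subgroup.subset_closure (Set.mem_insert_of_mem _ rfl))
  have hle2 : Subgroup.closure ({π} : Set (Equiv.Perm (Fin N))) ≤
      Subgroup.closure ({a, b} : Set (Equiv.Perm (Fin N))) := by
    rw [Subgroup.closure_le]
    intro p hp
    rw [Set.mem_singleton_iff] at hp
    rw [hp]
    exact hmemπ
  set g := qmap hle2 with hg
  have hfib : ∀ q, (Finset.univ.filter fun p => g p = q).card = 2 := by
    intro q
    induction q using Quotient.inductionOn' with
    | h z =>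
      have hmk : ∀ w : Fin N, (g (Quotient.mk'' w) = Quotient.mk'' z) ↔
          (π.SameCycle z w ∨ π.SameCycle (a z) w) := by
        intro w
        rw [hg, qmap_mk, mk_eq_iff]
        constructor
        · rintro ⟨g', hg', rfl⟩
          obtain ⟨m, rfl | rfl⟩ := hNF g' hg'
          · exact Or.inl ⟨m, rfl⟩
          · refine Or.inr ⟨-m, ?_⟩
            rw [← Equiv.Perm.mul_apply, ← h2 m]
        · rintro (⟨m, hm⟩ | ⟨m, hm⟩)
          · exact ⟨π ^ m, Subgroup.zpow_mem _ hmemπ m, hm⟩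
          · refine ⟨π ^ m * a, mul_mem (Subgroup.zpow_mem _ hmemπ m)
              (Subgroup.subset_closure (Set.mem_insert _ _)), ?_⟩
            rw [Equiv.Perm.mul_apply]
            exact hm
      have hne : (Quotient.mk'' z : MulAction.orbitRel.Quotient
          (Subgroup.closure ({π} : Set (Equiv.Perm (Fin N)))) (Fin N)) ≠
          Quotient.mk'' (a z) := by
        rw [Ne, mk_single_eq_iff]
        exact hfix z
      refine filter_card_two g _ _ _ hne ?_
      intro p
      induction p using Quotient.inductionOn' with
      | h w =>
        rw [hmk w, mk_single_eq_iff, mk_single_eq_iff]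
        constructor
        · rintro (h | h)
          · exact Or.inl h.symm
          · exact Or.inr h.symm
        · rintro (h | h)
          · exact Or.inl h.symm
          · exact Or.inr h.symm
  have hcard := card_fiber_sum g (fun _ => 2) hfib
  have e1 : oc ({π} : Set (Equiv.Perm (Fin N))) =
      ∑ _q : MulAction.orbitRel.Quotient
        (Subgroup.closure ({a, b} : Set (Equiv.Perm (Fin N)))) (Fin N), 2 :=
    Nat.card_eq_fintype_card.trans hcard
  have e2 : numLoops a b = Fintype.card (MulAction.orbitRel.Quotient
      (Subgroup.closure ({a, b} : Set (Equiv.Perm (Fin N)))) (Fin N)) :=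
    Nat.card_eq_fintype_card
  rw [e1, Finset.sum_const, Finset.card_univ, smul_eq_mul, e2, mul_comm]

lemma key_lemma (S0 S1 : Equiv.Perm (Fin N)) (h0 : IsPairPartition S0)
    (h1 : IsPairPartition S1) (i j : Fin N) (hij : i ≠ j) (col : Fin N → ℕ)
    (hinv : ∀ u, col (S0 (S1 u)) = col u)
    (hca : col (S0 i) ≠ col i) (hcb : col (S0 j) ≠ col i)
    (hcab : col (S0 i) = col (S0 j)) :
    numLoops (Equiv.swap i j * S0 * Equiv.swap i j) S1 = numLoops S0 S1 + 1 ∨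
      numLoops S0 S1 = numLoops (Equiv.swap i j * S0 * Equiv.swap i j) S1 + 1 := by
  classical
  have hS00 : S0 * S0 = 1 := Equiv.ext fun x => h0.1 x
  have hS0inv : S0⁻¹ = S0 := inv_eq_of_mul_eq_one_right hS00
  have hS1inv : S1⁻¹ = S1 := inv_eq_of_mul_eq_one_right (Equiv.ext fun x => h1.1 x)
  set π : Equiv.Perm (Fin N) := S0 * S1 with hπdef
  have hcolπ : ∀ u, col (π u) = col u := fun u => hinv u
  have hab : S0 i ≠ S0 j := fun h => hij (S0.injective h)
  set ρ : Equiv.Perm (Fin N) := Equiv.swap (S0 i) (S0 j) * π with hρdef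
  have hcolτ' : ∀ v, col (Equiv.swap (S0 i) (S0 j) v) = col v := by
    intro v
    rcases eq_or_ne v (S0 i) with rfl | hva
    · rw [Equiv.swap_apply_left, ← hcab]
    rcases eq_or_ne v (S0 j) with rfl | hvb
    · rw [Equiv.swap_apply_right, hcab]
    · rw [Equiv.swap_apply_of_ne_of_ne hva hvb]
  have hcolρ : ∀ u, col (ρ u) = col u := by
    intro u
    have e : ρ u = Equiv.swap (S0 i) (S0 j) (π u) := rfl
    rw [e, hcolτ', hcolπ]
  have hnia : ¬ π.SameCycle i (S0 i) := fun h => hca (sameCycle_col_eq hcolπ h).symm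
  have hnib : ¬ π.SameCycle i (S0 j) := fun h => hcb (sameCycle_col_eq hcolπ h).symm
  have hρia : ¬ ρ.SameCycle i (S0 i) := fun h => hca (sameCycle_col_eq hcolρ h).symm
  have hρib : ¬ ρ.SameCycle i (S0 j) := fun h => hcb (sameCycle_col_eq hcolρ h).symm
  have hconj : S0 * π * S0⁻¹ = π⁻¹ := by
    rw [hπdef, mul_inv_rev, hS1inv, hS0inv, ← mul_assoc, hS00, one_mul]
  have hdir1 : π.SameCycle i j → π.SameCycle (S0 i) (S0 j) := by
    intro h
    have h3 := h.conj (g := S0)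
    rw [hconj] at h3
    exact Equiv.Perm.sameCycle_inv.mp h3
  have hdir2 : π.SameCycle (S0 i) (S0 j) → π.SameCycle i j := by
    intro h
    have h3 := h.conj (g := S0)
    rw [hconj] at h3
    rw [Equiv.Perm.sameCycle_inv] at h3
    rwa [h0.1 i, h0.1 j] at h3
  have hππ' : Equiv.swap i j * ρ = Equiv.swap i j * S0 * Equiv.swap i j * S1 := by
    rw [hρdef, Equiv.swap_apply_apply S0 i j, hπdef]
    group
  have hτ'ρ : Equiv.swap (S0 i) (S0 j) * ρ = π := by
    rw [hρdef, ← mul_assoc, Equiv.swap_mul_self, one_mul]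
  have h0' : IsPairPartition (Equiv.swap i j * S0 * Equiv.swap i j) := by
    constructor
    · intro x
      simp only [Equiv.Perm.mul_apply, Equiv.swap_apply_self]
      rw [h0.1, Equiv.swap_apply_self]
    · intro x hx
      simp only [Equiv.Perm.mul_apply] at hx
      apply h0.2 (Equiv.swap i j x)
      have h4 := congrArg (Equiv.swap i j) hx
      rwa [Equiv.swap_apply_self] at h4
  have h2nl : oc ({π} : Set (Equiv.Perm (Fin N))) = 2 * numLoops S0 S1 := by
    have h4 := oc_mul_eq_two_mul_numLoops S0 S1 h0 h1
    rwa [← hπdef] at h4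
  have h2nl' : oc ({Equiv.swap i j * S0 * Equiv.swap i j * S1} : Set (Equiv.Perm (Fin N))) =
      2 * numLoops (Equiv.swap i j * S0 * Equiv.swap i j) S1 :=
    oc_mul_eq_two_mul_numLoops _ S1 h0' h1
  by_cases hsc : π.SameCycle i j
  · have hab2 : π.SameCycle (S0 i) (S0 j) := hdir1 hsc
    have s1 : oc ({ρ} : Set (Equiv.Perm (Fin N))) = oc {π} + 1 := by
      have h4 := oc_swap_mul_of_sameCycle π hab hab2
      rwa [← hρdef] at h4
    have hρij : ρ.SameCycle i j := by
      have h4 := sameCycle_swap_mul_of_sameCycle π hnia hnib hsc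
      rwa [← hρdef] at h4
    have s2 : oc {Equiv.swap i j * ρ} = oc {ρ} + 1 := oc_swap_mul_of_sameCycle ρ hij hρij
    rw [hππ'] at s2
    left
    omega
  · have hab2 : ¬ π.SameCycle (S0 i) (S0 j) := fun h => hsc (hdir2 h)
    have s1 : oc ({π} : Set (Equiv.Perm (Fin N))) = oc {ρ} + 1 := by
      have h4 := oc_swap_mul_of_not_sameCycle π hab hab2
      rwa [← hρdef] at h4
    have hρij : ¬ ρ.SameCycle i j := by
      intro h
      apply hsc
      have h4 := sameCycle_swap_mul_of_sameCycle ρ hρia hρib h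
      rwa [hτ'ρ] at h4
    have s2 : oc ({ρ} : Set (Equiv.Perm (Fin N))) = oc {Equiv.swap i j * ρ} + 1 :=
      oc_swap_mul_of_not_sameCycle ρ hij hρij
    rw [hππ'] at s2
    right
    omega

end ZonalPP
namespace ZonalPP

/-- If some function `f` into the boxes of `2λ` satisfies (P0),(P1),(P2)
w.r.t. `(S₀,S₁,S₂)` and `f i = f j` with `i ≠ j`, then for `S₀' = (i j)∘S₀∘(i j)` the
numbers of loops `|L(S₀',S₁)|` and `|L(S₀,S₁)|` differ by exactly one; consequently
`(-1)^{|L(S₀,S₁)|} + (-1)^{|L(S₀',S₁)|} = 0`. -/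
theorem statement13 {k n : ℕ} (S0 S1 S2 : Equiv.Perm (Fin (2*k)))
    (h0 : IsPairPartition S0) (h1 : IsPairPartition S1) (h2 : IsPairPartition S2)
    (lam : Nat.Partition n) (i j : Fin (2*k)) (hij : i ≠ j)
    (hex : ∃ f : Fin (2*k) → ℕ × ℕ, InBoxes2 lam f ∧ P0cond S0 f ∧ P1cond S0 S1 f ∧
      P2cond S2 f ∧ f i = f j) :
    (numLoops (Equiv.swap i j * S0 * Equiv.swap i j) S1 = numLoops S0 S1 + 1 ∨
      numLoops S0 S1 = numLoops (Equiv.swap i j * S0 * Equiv.swap i j) S1 + 1) ∧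
    (-1 : ℤ) ^ numLoops S0 S1 +
      (-1 : ℤ) ^ numLoops (Equiv.swap i j * S0 * Equiv.swap i j) S1 = 0 := by
  obtain ⟨f, -, hP0, hP1, -, hfij⟩ := hex
  have hci : (f i).2 = (f j).2 := by rw [hfij]
  have hca : (fun u => (f u).2) (S0 i) ≠ (fun u => (f u).2) i := (hP0 i).2.2
  have hcb : (fun u => (f u).2) (S0 j) ≠ (fun u => (f u).2) i := by
    have h4 := (hP0 j).2.2
    simp only []
    omega
  have hcab : (fun u => (f u).2) (S0 i) = (fun u => (f u).2) (S0 j) := by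
    have e1 := (hP0 i).2.1
    have e2 := (hP0 i).2.2
    have e3 := (hP0 j).2.1
    have e4 := (hP0 j).2.2
    simp only []
    omega
  have hkey := key_lemma S0 S1 h0 h1 i j hij (fun u => (f u).2)
    (fun u => hP1 u) hca hcb hcab
  refine ⟨hkey, ?_⟩
  rcases hkey with h | h
  · rw [h, pow_succ]
    ring
  · rw [h, pow_succ]
    ring

end ZonalPP
end

section
/- Let S₁, S₂ be pair-partitions of [2k], let λ be a partition, and let f be a function from {1,…,2k} to the boxes of 2λ that is NOT injective. Then Σ_{S₀} (−1)^{k − |L(S₀,S₁)|} · [f satisfies (P0), (P1) and (P2) with respect to (S₀,S₁,S₂)] = 0, where the sum runs over all pair-partitions S₀ of [2k] and [·] equals 1 if the condition holds and 0 otherwise. -/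
open scoped BigOperators

namespace ZonalPP

open Finset Equiv Equiv.Perm


section Generic

variable {α : Type*} [Fintype α] [DecidableEq α]

set_option linter.unusedSectionVars false
set_option linter.unusedVariables false

open Classical in
/-- The equivalence class of `x` as a `Finset`. -/
noncomputable def cls (r : α → α → Prop) (x : α) : Finset α :=
  Finset.univ.filter (r x)

set_option linter.unusedSectionVars false in
lemma mem_cls {r : α → α → Prop} {x y : α} : y ∈ cls r x ↔ r x y := by
  classical simp [cls]

lemma cls_eq_of {r : α → α → Prop} (heq : Equivalence r) {x y : α} (h : r x y) :
    cls r x = cls r y := by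
  ext z
  simp only [mem_cls]
  exact ⟨fun hz => heq.trans (heq.symm h) hz, fun hz => heq.trans h hz⟩

lemma card_quotient_eq (s : Setoid α) :
    Nat.card (Quotient s) = (Finset.univ.image (cls s.r)).card := by
  have hwd : ∀ a b : α, s.r a b → cls s.r a = cls s.r b := fun a b h => cls_eq_of s.iseqv h
  let F : Quotient s → Finset α := Quotient.lift (cls s.r) hwd
  have hmem : ∀ q : Quotient s, F q ∈ Finset.univ.image (cls s.r) := by
    intro q
    induction q using Quotient.ind with
    | _ a => exact Finset.mem_image_of_mem _ (Finset.mem_univ a)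
  have hinj : Function.Injective F := by
    intro q1 q2 h
    induction q1 using Quotient.ind with
    | _ a =>
    induction q2 using Quotient.ind with
    | _ b =>
    have ha : a ∈ cls s.r a := mem_cls.2 (s.iseqv.refl a)
    have hab : cls s.r a = cls s.r b := h
    have : a ∈ cls s.r b := hab ▸ ha
    exact Quotient.sound (s.iseqv.symm (mem_cls.1 this))
  have hsurj : ∀ O ∈ Finset.univ.image (cls s.r), ∃ q, F q = O := by
    intro O hO
    obtain ⟨a, -, rfl⟩ := Finset.mem_image.1 hO
    exact ⟨Quotient.mk s a, rfl⟩
  have : Function.Bijective (fun q => (⟨F q, hmem q⟩ :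
      {O // O ∈ Finset.univ.image (cls s.r)})) := by
    constructor
    · intro q1 q2 h
      exact hinj (congrArg Subtype.val h)
    · rintro ⟨O, hO⟩
      obtain ⟨q, rfl⟩ := hsurj O hO
      exact ⟨q, rfl⟩
  rw [Nat.card_congr (Equiv.ofBijective _ this), Nat.card_eq_fintype_card,
    Fintype.card_coe]


lemma sameCycle_equivalence (g : Perm α) : Equivalence g.SameCycle :=
  ⟨SameCycle.refl g, fun h => h.symm, fun h h' => h.trans h'⟩

lemma pow_eq_pow_of_agree {g h : Perm α} {A : Set α} (hAg : ∀ x ∈ A, g x ∈ A)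
    (hagree : ∀ x ∈ A, g x = h x) {x : α} (hx : x ∈ A) :
    ∀ n : ℕ, (g ^ n) x = (h ^ n) x ∧ (g ^ n) x ∈ A := by
  intro n
  induction n with
  | zero => simpa using hx
  | succ n ih =>
    have h1 : (g ^ (n + 1)) x = g ((g ^ n) x) := by
      rw [pow_succ' g n]; rfl
    have h2 : (h ^ (n + 1)) x = h ((h ^ n) x) := by
      rw [pow_succ' h n]; rfl
    refine ⟨?_, ?_⟩
    · rw [h1, h2, ← ih.1, hagree _ ih.2]
    · rw [h1]; exact hAg _ ih.2

lemma sameCycle_iff_of_agree {g h : Perm α} {A : Set α} (hAg : ∀ x ∈ A, g x ∈ A)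
    (hAh : ∀ x ∈ A, h x ∈ A) (hagree : ∀ x ∈ A, g x = h x) {x y : α} (hx : x ∈ A) :
    g.SameCycle x y ↔ h.SameCycle x y := by
  constructor
  · intro hsc
    obtain ⟨i, -, hi⟩ := hsc.exists_pow_eq'
    exact ⟨(i : ℤ), by rw [zpow_natCast, ← (pow_eq_pow_of_agree hAg hagree hx i).1, hi]⟩
  · intro hsc
    obtain ⟨i, -, hi⟩ := hsc.exists_pow_eq'
    exact ⟨(i : ℤ), by
      rw [zpow_natCast, (pow_eq_pow_of_agree hAg hagree hx i).1, hi]⟩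

lemma pow_mod_period {g : Perm α} {x : α} {d : ℕ} (hd : (g ^ d) x = x) (a : ℕ) :
    (g ^ a) x = (g ^ (a % d)) x := by
  conv_lhs => rw [← Nat.mod_add_div a d]
  rw [pow_add]
  have : ∀ q : ℕ, (g ^ (d * q)) x = x := by
    intro q
    induction q with
    | zero => simp
    | succ q ih =>
      have : g ^ (d * (q + 1)) = g ^ (d * q) * g ^ d := by
        rw [← pow_add, Nat.mul_succ]
      rw [this, Perm.mul_apply, hd, ih]
  rw [Perm.mul_apply, this]

/-- The key lemma: multiplying by the transposition `(s t)` toggles whether `s` and `t`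
are in the same cycle. -/
lemma sameCycle_mul_swap_iff {π : Perm α} {s t : α} (hst : s ≠ t) :
    (π * Equiv.swap s t).SameCycle s t ↔ ¬ π.SameCycle s t := by
  classical
  set σ := π * Equiv.swap s t with hσ
  have hσs : σ s = π t := by simp [hσ, Perm.mul_apply]
  have hσt : σ t = π s := by simp [hσ, Perm.mul_apply]
  have hσo : ∀ x, x ≠ s → x ≠ t → σ x = π x := by
    intro x h1 h2
    simp [hσ, Perm.mul_apply, Equiv.swap_apply_of_ne_of_ne h1 h2]
  -- trajectory lemma
  have H1 : ∀ j : ℕ, (∀ i, 1 ≤ i → i ≤ j → (π ^ i) s ≠ s ∧ (π ^ i) s ≠ t) →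
      (σ ^ (j + 1)) t = (π ^ (j + 1)) s := by
    intro j
    induction j with
    | zero => intro _; simpa using hσt
    | succ j ih =>
      intro hcond
      have hstep : (σ ^ (j + 2)) t = σ ((σ ^ (j + 1)) t) := by
        rw [pow_succ' σ (j + 1)]; rfl
      have hstep' : (π ^ (j + 2)) s = π ((π ^ (j + 1)) s) := by
        rw [pow_succ' π (j + 1)]; rfl
      have hprev := ih (fun i h1 h2 => hcond i h1 (h2.trans (Nat.le_succ j)))
      have hne := hcond (j + 1) (Nat.le_add_left 1 j) le_rfl
      rw [hstep, hprev, hσo _ hne.1 hne.2, hstep']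
  -- minimal period of s under π
  have hex : ∃ n, 0 < n ∧ (π ^ n) s = s :=
    ⟨orderOf π, orderOf_pos π, by simp [pow_orderOf_eq_one]⟩
  set d := Nat.find hex with hdd
  obtain ⟨hd0, hds⟩ := Nat.find_spec hex
  have hdmin : ∀ i, 0 < i → i < d → (π ^ i) s ≠ s := by
    intro i hi0 hid hieq
    exact Nat.find_min hex hid ⟨hi0, hieq⟩
  constructor
  · -- same σ-cycle → same π-cycle would be contradictory
    intro hσsc hπsc
    obtain ⟨i, -, hi⟩ := hπsc.exists_pow_eq'
    have him : (π ^ (i % d)) s = t := by rw [← pow_mod_period hds i, hi]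
    set m := i % d with hm
    have hm0 : m ≠ 0 := by
      intro h; rw [h] at him; simp at him; exact hst him
    have hmd : m < d := Nat.mod_lt _ hd0
    have hfacts : ∀ j, 1 ≤ j → j ≤ m - 1 → (π ^ j) s ≠ s ∧ (π ^ j) s ≠ t := by
      intro j hj1 hjm
      have hjm' : j < m := by omega
      refine ⟨hdmin j hj1 (hjm'.trans hmd), ?_⟩
      intro hjt
      -- then (π ^ (m - j)) s = s with 0 < m - j < d : contradiction
      have h1 : (π ^ m) s = (π ^ (m - j)) ((π ^ j) s) := by
        rw [← Perm.mul_apply, ← pow_add]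
        congr 2
        omega
      have h2 : (π ^ (m - j)) ((π ^ j) s) = (π ^ j) ((π ^ (m - j)) s) := by
        rw [← Perm.mul_apply, ← Perm.mul_apply, ← pow_add, ← pow_add, Nat.add_comm]
      have h3 : (π ^ j) ((π ^ (m - j)) s) = (π ^ j) s := by
        rw [← h2, ← h1, him, hjt]
      have h4 : (π ^ (m - j)) s = s := (π ^ j).injective h3
      exact hdmin (m - j) (by omega) (by omega) h4
    have hσm : (σ ^ m) t = t := by
      have := H1 (m - 1) (fun i h1 h2 => hfacts i h1 h2)
      rw [Nat.sub_add_cancel (by omega)] at this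
      rw [this, ← him]
    -- now σ-orbit of t is {σ^j t, j < m} which avoids s
    obtain ⟨j, -, hj⟩ := hσsc.symm.exists_pow_eq'
    have hjm : (σ ^ (j % m)) t = s := by rw [← pow_mod_period hσm j, hj]
    set r := j % m with hr
    have hr0 : r ≠ 0 := by
      intro h; rw [h] at hjm; simp at hjm; exact hst hjm.symm
    have hrm : r < m := Nat.mod_lt _ (by omega)
    have : (σ ^ r) t = (π ^ r) s := by
      have := H1 (r - 1) (fun i h1 h2 => hfacts i h1 (by omega))
      rwa [Nat.sub_add_cancel (by omega)] at this
    rw [this] at hjm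
    exact hdmin r (by omega) (by omega) hjm
  · -- not same π-cycle → same σ-cycle
    intro hno
    have hnt : ∀ i : ℕ, (π ^ i) s ≠ t := by
      intro i hi
      exact hno ⟨(i : ℤ), by rw [zpow_natCast, hi]⟩
    have hfin : (σ ^ d) t = s := by
      have := H1 (d - 1) (fun i h1 h2 => ⟨hdmin i h1 (by omega), hnt i⟩)
      rw [Nat.sub_add_cancel (by omega)] at this
      rw [this, hds]
    have : σ.SameCycle t s := ⟨(d : ℤ), by rw [zpow_natCast, hfin]⟩
    exact this.symm


lemma cls_eq_cls_of_avoid {π σ : Perm α} {s t x : α}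
    (hagree : ∀ y, y ≠ s → y ≠ t → σ y = π y)
    (hs : ¬ π.SameCycle x s) (ht : ¬ π.SameCycle x t) :
    cls π.SameCycle x = cls σ.SameCycle x := by
  set A : Set α := {y | π.SameCycle x y} with hA
  have hAπ : ∀ y ∈ A, π y ∈ A := by
    intro y hy
    exact hy.trans ⟨1, by simp⟩
  have hagree' : ∀ y ∈ A, π y = σ y := by
    intro y hy
    have h1 : y ≠ s := fun h => hs (h ▸ hy)
    have h2 : y ≠ t := fun h => ht (h ▸ hy)
    exact (hagree y h1 h2).symm
  have hAσ : ∀ y ∈ A, σ y ∈ A := fun y hy => by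
    rw [← hagree' y hy]; exact hAπ y hy
  have hx : x ∈ A := SameCycle.refl π x
  ext y
  simp only [mem_cls]
  exact sameCycle_iff_of_agree hAπ hAσ hagree' hx

lemma card_image_cls_split (π : Perm α) {s t : α} (hst : s ≠ t) {L : Finset α}
    (hs : s ∈ L) (ht : t ∈ L) :
    (L.image (cls π.SameCycle)).card =
      ((L.image (cls π.SameCycle)).filter (fun O => s ∉ O ∧ t ∉ O)).card +
        (if π.SameCycle s t then 1 else 2) := by
  classical
  set C := L.image (cls π.SameCycle) with hC
  set R := C.filter (fun O => s ∉ O ∧ t ∉ O) with hR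
  have heq := sameCycle_equivalence π
  have hsplit : C = R ∪ {cls π.SameCycle s, cls π.SameCycle t} := by
    ext O
    constructor
    · intro hO
      by_cases hOs : s ∈ O
      · obtain ⟨x, -, rfl⟩ := Finset.mem_image.1 hO
        have := cls_eq_of heq (mem_cls.1 hOs)
        exact Finset.mem_union_right _ (by simp [this])
      · by_cases hOt : t ∈ O
        · obtain ⟨x, -, rfl⟩ := Finset.mem_image.1 hO
          have := cls_eq_of heq (mem_cls.1 hOt)
          exact Finset.mem_union_right _ (by simp [this])
        · exact Finset.mem_union_left _ (Finset.mem_filter.2 ⟨hO, hOs, hOt⟩)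
    · intro hO
      rcases Finset.mem_union.1 hO with h | h
      · exact Finset.mem_of_mem_filter _ h
      · rcases Finset.mem_insert.1 h with h | h
        · exact h ▸ Finset.mem_image_of_mem _ hs
        · exact (Finset.mem_singleton.1 h) ▸ Finset.mem_image_of_mem _ ht
  have hdisj : Disjoint R {cls π.SameCycle s, cls π.SameCycle t} := by
    rw [Finset.disjoint_right]
    intro O hO hOR
    have h1 := (Finset.mem_filter.1 hOR).2
    rcases Finset.mem_insert.1 hO with h | h
    · exact h1.1 (h ▸ mem_cls.2 (heq.refl s))
    · exact h1.2 ((Finset.mem_singleton.1 h) ▸ mem_cls.2 (heq.refl t))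
  rw [hsplit, Finset.card_union_of_disjoint hdisj]
  congr 1
  by_cases h : π.SameCycle s t
  · have : cls π.SameCycle s = cls π.SameCycle t := cls_eq_of heq h
    simp [this, h]
  · have hne : cls π.SameCycle s ≠ cls π.SameCycle t := by
      intro hcls
      exact h (mem_cls.1 (hcls ▸ mem_cls.2 (heq.refl t)))
    simp [h, Finset.card_pair hne]

lemma rest_image_cls_eq {π σ : Perm α} {s t : α}
    (hagree : ∀ y, y ≠ s → y ≠ t → σ y = π y) (L : Finset α) :
    (L.image (cls π.SameCycle)).filter (fun O => s ∉ O ∧ t ∉ O) =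
      (L.image (cls σ.SameCycle)).filter (fun O => s ∉ O ∧ t ∉ O) := by
  classical
  ext O
  simp only [Finset.mem_filter, Finset.mem_image]
  constructor
  · rintro ⟨⟨x, hx, rfl⟩, h1, h2⟩
    have heq : cls π.SameCycle x = cls σ.SameCycle x :=
      cls_eq_cls_of_avoid hagree (fun h => h1 (mem_cls.2 h)) (fun h => h2 (mem_cls.2 h))
    exact ⟨⟨x, hx, heq.symm⟩, heq ▸ h1, heq ▸ h2⟩
  · rintro ⟨⟨x, hx, rfl⟩, h1, h2⟩
    have heq : cls σ.SameCycle x = cls π.SameCycle x :=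
      cls_eq_cls_of_avoid (fun y hy1 hy2 => (hagree y hy1 hy2).symm)
        (fun h => h1 (mem_cls.2 h)) (fun h => h2 (mem_cls.2 h))
    exact ⟨⟨x, hx, heq.symm⟩, heq ▸ h1, heq ▸ h2⟩

lemma two_mul_card_image_cls_le {r : α → α → Prop} (heq : Equivalence r) (g : Perm α)
    (hg : ∀ x, r x (g x)) (hgne : ∀ x, g x ≠ x) :
    2 * (Finset.univ.image (cls r)).card ≤ Fintype.card α := by
  classical
  have h2 : ∀ O ∈ Finset.univ.image (cls r), 2 ≤ O.card := by
    intro O hO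
    obtain ⟨x, -, rfl⟩ := Finset.mem_image.1 hO
    exact Finset.one_lt_card.2
      ⟨x, mem_cls.2 (heq.refl x), g x, mem_cls.2 (hg x), (hgne x).symm⟩
  have hdisj : ∀ O1 ∈ Finset.univ.image (cls r), ∀ O2 ∈ Finset.univ.image (cls r),
      O1 ≠ O2 → Disjoint (id O1) (id O2) := by
    rintro O1 h1 O2 h2 hne
    obtain ⟨x1, -, rfl⟩ := Finset.mem_image.1 h1
    obtain ⟨x2, -, rfl⟩ := Finset.mem_image.1 h2
    rw [Finset.disjoint_left]
    intro z hz1 hz2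
    exact hne ((cls_eq_of heq (mem_cls.1 hz1)).trans (cls_eq_of heq (mem_cls.1 hz2)).symm)
  calc 2 * (Finset.univ.image (cls r)).card
      = ∑ _O ∈ Finset.univ.image (cls r), 2 := by
        rw [Finset.sum_const, smul_eq_mul, mul_comm]
    _ ≤ ∑ O ∈ Finset.univ.image (cls r), O.card := Finset.sum_le_sum h2
    _ = ((Finset.univ.image (cls r)).biUnion id).card := (Finset.card_biUnion hdisj).symm
    _ ≤ Fintype.card α := by
        rw [← Finset.card_univ]
        exact Finset.card_le_card (Finset.subset_univ _)

end Generic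




section Specific

variable {N : ℕ} {S0 S1 : Equiv.Perm (Fin N)} {f : Fin N → ℕ × ℕ}

set_option linter.unusedSectionVars false

lemma inv_of_involutive {g : Perm (Fin N)} (h : Function.Involutive g) : g⁻¹ = g := by
  apply Equiv.ext
  intro x
  rw [Perm.inv_eq_iff_eq]
  exact (h x).symm

lemma col_flip_S1 (hP0 : P0cond S0 f) (hP1 : P1cond S0 S1 f) (x : Fin N) :
    (f (S1 x)).2 / 2 = (f x).2 / 2 ∧ (f (S1 x)).2 ≠ (f x).2 := by
  have h1 := hP1 x
  obtain ⟨-, h2a, h2b⟩ := hP0 (S1 x)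
  constructor <;> omega

lemma col_pow (hP1 : P1cond S0 S1 f) (n : ℕ) (x : Fin N) :
    (f (((S0 * S1) ^ n) x)).2 = (f x).2 := by
  induction n with
  | zero => simp
  | succ n ih =>
    have h : ((S0 * S1) ^ (n + 1)) x = (S0 * S1) (((S0 * S1) ^ n) x) := by
      rw [pow_succ' _ n]; rfl
    rw [h, Perm.mul_apply, hP1 _, ih]

lemma col_sameCycle (hP1 : P1cond S0 S1 f) {x y : Fin N} (h : (S0 * S1).SameCycle x y) :
    (f y).2 = (f x).2 := by
  obtain ⟨i, -, hi⟩ := h.exists_pow_eq'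
  rw [← hi, col_pow hP1]

lemma sameCycle_S1 (h0 : Function.Involutive S0) (h1 : Function.Involutive S1)
    {u v : Fin N} (h : (S0 * S1).SameCycle u v) :
    (S0 * S1).SameCycle (S1 u) (S1 v) := by
  obtain ⟨n, -, hn⟩ := h.exists_pow_eq'
  refine ⟨-(n : ℤ), ?_⟩
  have hconj : S1 * (S0 * S1) * S1⁻¹ = (S0 * S1)⁻¹ := by
    rw [mul_inv_rev, inv_of_involutive h0, inv_of_involutive h1]
    ext x
    simp [Perm.mul_apply, h1 x]
  have hpow : ((S0 * S1)⁻¹) ^ n = S1 * (S0 * S1) ^ n * S1⁻¹ := by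
    rw [← hconj, conj_pow]
  rw [zpow_neg, zpow_natCast, ← inv_pow, hpow, Perm.mul_apply, Perm.mul_apply,
    show S1⁻¹ (S1 u) = u from Perm.inv_eq_iff_eq.2 rfl, hn]

lemma closure_sameCycle (h0 : Function.Involutive S0) (h1 : Function.Involutive S1) :
    ∀ g ∈ Subgroup.closure ({S0, S1} : Set (Equiv.Perm (Fin N))), ∀ x,
      (S0 * S1).SameCycle (g x) x ∨ (S0 * S1).SameCycle (g x) (S1 x) := by
  intro g hg
  induction hg using Subgroup.closure_induction with
  | mem y hy =>
    intro x
    simp only [Set.mem_insert_iff, Set.mem_singleton_iff] at hy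
    rcases hy with h | h
    · right
      rw [h]
      have hsc : (S0 * S1).SameCycle (S1 x) (S0 x) := ⟨1, by simp [Perm.mul_apply, h1 x]⟩
      exact hsc.symm
    · right
      rw [h]
  | one =>
    intro x
    left
    simp only [Perm.one_apply]
    exact SameCycle.refl _ _
  | mul y z hy hz ihy ihz =>
    intro x
    have hyz : (y * z) x = y (z x) := rfl
    rw [hyz]
    rcases ihy (z x) with h' | h' <;> rcases ihz x with h'' | h''
    · exact Or.inl (h'.trans h'')
    · exact Or.inr (h'.trans h'')
    · exact Or.inr (h'.trans (sameCycle_S1 h0 h1 h''))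
    · have hS := sameCycle_S1 h0 h1 h''
      rw [h1 x] at hS
      exact Or.inl (h'.trans hS)
  | inv y hy ihy =>
    intro x
    have e : y (y⁻¹ x) = x := (Perm.inv_eq_iff_eq.1 rfl).symm
    rcases ihy (y⁻¹ x) with h' | h'
    · rw [e] at h'
      exact Or.inl h'.symm
    · rw [e] at h'
      have hS := sameCycle_S1 h0 h1 h'
      rw [h1 (y⁻¹ x)] at hS
      exact Or.inr hS.symm

/-- The orbit relation of the subgroup generated by two permutations. -/
def Rel (S0 S1 : Equiv.Perm (Fin N)) : Fin N → Fin N → Prop :=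
  fun x y => x ∈ MulAction.orbit (Subgroup.closure ({S0, S1} : Set (Equiv.Perm (Fin N)))) y

lemma rel_iff {x y : Fin N} :
    Rel S0 S1 x y ↔
      ∃ g ∈ Subgroup.closure ({S0, S1} : Set (Equiv.Perm (Fin N))), g y = x := by
  unfold Rel
  rw [MulAction.mem_orbit_iff]
  constructor
  · rintro ⟨⟨g, hg⟩, h⟩
    exact ⟨g, hg, h⟩
  · rintro ⟨g, hg, h⟩
    exact ⟨⟨g, hg⟩, h⟩

lemma rel_equivalence : Equivalence (Rel S0 S1) :=
  (MulAction.orbitRel (Subgroup.closure ({S0, S1} : Set (Equiv.Perm (Fin N)))) (Fin N)).iseqv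

lemma numLoops_eq_card (S0 S1 : Equiv.Perm (Fin N)) :
    numLoops S0 S1 = (Finset.univ.image (cls (Rel S0 S1))).card :=
  card_quotient_eq (MulAction.orbitRel _ _)

lemma two_mul_numLoops_le (h0 : IsPairPartition S0) :
    2 * numLoops S0 S1 ≤ N := by
  rw [numLoops_eq_card]
  have hmem0 : S0 ∈ Subgroup.closure ({S0, S1} : Set (Equiv.Perm (Fin N))) :=
    Subgroup.subset_closure (by simp)
  have h := two_mul_card_image_cls_le (rel_equivalence (S0 := S0) (S1 := S1)) S0
    (fun x => rel_iff.2 ⟨S0, hmem0, h0.1 x⟩) h0.2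
  simpa using h

lemma numLoops_eq_level (h0 : IsPairPartition S0) (h1 : IsPairPartition S1)
    (hP0 : P0cond S0 f) (hP1 : P1cond S0 S1 f) {ℓ : ℕ} (hℓ : ℓ < 2) :
    numLoops S0 S1 =
      ((Finset.univ.filter (fun x : Fin N => (f x).2 % 2 = ℓ)).image
        (cls (S0 * S1).SameCycle)).card := by
  classical
  have heqR : Equivalence (Rel S0 S1) := rel_equivalence
  have hmem0 : S0 ∈ Subgroup.closure ({S0, S1} : Set (Equiv.Perm (Fin N))) :=
    Subgroup.subset_closure (by simp)
  have hmem1 : S1 ∈ Subgroup.closure ({S0, S1} : Set (Equiv.Perm (Fin N))) :=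
    Subgroup.subset_closure (by simp)
  have hrelS1 : ∀ x : Fin N, Rel S0 S1 x (S1 x) := by
    intro x
    exact rel_iff.2 ⟨S1, hmem1, h1.1 x⟩
  have hrelpi : ∀ {x y : Fin N}, (S0 * S1).SameCycle x y → Rel S0 S1 x y := by
    intro x y h
    obtain ⟨i, hi⟩ := h.symm
    exact rel_iff.2 ⟨(S0 * S1) ^ i,
      Subgroup.zpow_mem _ (Subgroup.mul_mem _ hmem0 hmem1) i, hi⟩
  set Lf := Finset.univ.filter (fun x : Fin N => (f x).2 % 2 = ℓ) with hLfdef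
  have hεS1 : ∀ x : Fin N, (f (S1 x)).2 % 2 ≠ (f x).2 % 2 := by
    intro x
    have := col_flip_S1 hP0 hP1 x
    omega
  have hcls : ∀ x ∈ Lf, (cls (Rel S0 S1) x).filter (fun y => (f y).2 % 2 = ℓ)
      = cls (S0 * S1).SameCycle x := by
    intro x hx
    have hxℓ : (f x).2 % 2 = ℓ := (Finset.mem_filter.1 hx).2
    ext y
    simp only [Finset.mem_filter, mem_cls]
    constructor
    · rintro ⟨hxy, hy⟩
      obtain ⟨g, hg, hgx⟩ := rel_iff.1 hxy
      rcases closure_sameCycle h0.1 h1.1 g hg y with h' | h'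
      · rw [hgx] at h'
        exact h'
      · rw [hgx] at h'
        exfalso
        have hcol := col_sameCycle hP1 h'
        have := hεS1 y
        omega
    · intro hsc
      refine ⟨hrelpi hsc, ?_⟩
      have := col_sameCycle hP1 hsc
      omega
  have step1 : Finset.univ.image (cls (Rel S0 S1)) = Lf.image (cls (Rel S0 S1)) := by
    apply Finset.Subset.antisymm
    · intro O hO
      obtain ⟨x, -, rfl⟩ := Finset.mem_image.1 hO
      by_cases hx : (f x).2 % 2 = ℓ
      · exact Finset.mem_image_of_mem _ (Finset.mem_filter.2 ⟨Finset.mem_univ x, hx⟩)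
      · have hx1 : (f (S1 x)).2 % 2 = ℓ := by
          have := hεS1 x
          have h2 : (f x).2 % 2 < 2 := Nat.mod_lt _ (by norm_num)
          have h3 : (f (S1 x)).2 % 2 < 2 := Nat.mod_lt _ (by norm_num)
          omega
        rw [cls_eq_of heqR (hrelS1 x)]
        exact Finset.mem_image_of_mem _ (Finset.mem_filter.2 ⟨Finset.mem_univ _, hx1⟩)
    · exact Finset.image_subset_image (Finset.filter_subset _ _)
  rw [numLoops_eq_card, step1]
  apply Finset.card_bij (fun O _ => O.filter (fun y => (f y).2 % 2 = ℓ))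
  · intro O hO
    obtain ⟨x, hx, rfl⟩ := Finset.mem_image.1 hO
    rw [hcls x hx]
    exact Finset.mem_image_of_mem _ hx
  · intro O1 h1' O2 h2' hOO
    obtain ⟨x1, hx1, rfl⟩ := Finset.mem_image.1 h1'
    obtain ⟨x2, hx2, rfl⟩ := Finset.mem_image.1 h2'
    rw [hcls x1 hx1, hcls x2 hx2] at hOO
    have hsc : (S0 * S1).SameCycle x1 x2 :=
      mem_cls.1 (hOO ▸ mem_cls.2 (SameCycle.refl _ x2))
    exact cls_eq_of heqR (hrelpi hsc)
  · intro O hO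
    obtain ⟨x, hx, rfl⟩ := Finset.mem_image.1 hO
    exact ⟨cls (Rel S0 S1) x, Finset.mem_image_of_mem _ hx, hcls x hx⟩

lemma f_swap {l1 l2 : Fin N} (hf : f l1 = f l2) (z : Fin N) :
    f (Equiv.swap l1 l2 z) = f z := by
  by_cases h1 : z = l1
  · subst h1
    rw [Equiv.swap_apply_left, hf]
  · by_cases h2 : z = l2
    · subst h2
      rw [Equiv.swap_apply_right, hf]
    · rw [Equiv.swap_apply_of_ne_of_ne h1 h2]

lemma isPP_conj {l1 l2 : Fin N} (h0 : IsPairPartition S0) :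
    IsPairPartition (Equiv.swap l1 l2 * S0 * Equiv.swap l1 l2) := by
  constructor
  · intro x
    simp only [Perm.mul_apply]
    rw [Equiv.swap_apply_self, h0.1, Equiv.swap_apply_self]
  · intro x h
    simp only [Perm.mul_apply] at h
    have := congrArg (Equiv.swap l1 l2) h
    rw [Equiv.swap_apply_self] at this
    exact h0.2 _ this

lemma cond_conj {l1 l2 : Fin N} (hf : f l1 = f l2)
    (hP0 : P0cond S0 f) (hP1 : P1cond S0 S1 f) :
    P0cond (Equiv.swap l1 l2 * S0 * Equiv.swap l1 l2) f ∧
      P1cond (Equiv.swap l1 l2 * S0 * Equiv.swap l1 l2) S1 f := by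
  have hfab : (f (S0 l1)).2 = (f (S0 l2)).2 ∧ (f (S0 l1)).1 = (f (S0 l2)).1 := by
    obtain ⟨e1, e2, e3⟩ := hP0 l1
    obtain ⟨e4, e5, e6⟩ := hP0 l2
    rw [hf] at e1 e2 e3
    constructor
    · omega
    · rw [e1, e4]
  constructor
  · intro l
    simp only [Perm.mul_apply]
    rw [f_swap hf]
    obtain ⟨e1, e2, e3⟩ := hP0 (Equiv.swap l1 l2 l)
    rw [f_swap hf l] at e1 e2 e3
    exact ⟨e1, e2, e3⟩
  · intro l
    simp only [Perm.mul_apply]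
    rw [f_swap hf]
    by_cases hc1 : S1 l = l1
    · rw [hc1, Equiv.swap_apply_left, ← hfab.1, ← hc1]
      exact hP1 l
    · by_cases hc2 : S1 l = l2
      · rw [hc2, Equiv.swap_apply_right, hfab.1, ← hc2]
        exact hP1 l
      · rw [Equiv.swap_apply_of_ne_of_ne hc1 hc2]
        exact hP1 l

lemma neg_one_pow_add_eq_zero {k n n' : ℕ} (h : n ≤ k) (h' : n' ≤ k)
    (hd : n = n' + 1 ∨ n' = n + 1) :
    ((-1 : ℤ)) ^ (k - n) + (-1) ^ (k - n') = 0 := by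
  rcases hd with rfl | rfl
  · have e : k - n' = (k - (n' + 1)) + 1 := by omega
    rw [e, pow_succ]
    ring
  · have e : k - n = (k - (n + 1)) + 1 := by omega
    rw [e, pow_succ]
    ring

end Specific

open Classical in
/-- For a non-injective function `f` into the boxes of `2λ`,
`Σ_{S₀} (-1)^{k-|L(S₀,S₁)|} [f satisfies (P0),(P1),(P2) w.r.t. (S₀,S₁,S₂)] = 0`. -/
theorem statement14 {k n : ℕ} (S1 S2 : Equiv.Perm (Fin (2*k)))
    (h1 : IsPairPartition S1) (h2 : IsPairPartition S2)
    (lam : Nat.Partition n) (f : Fin (2*k) → ℕ × ℕ)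
    (hbox : InBoxes2 lam f) (hninj : ¬ Function.Injective f) :
    ∑ S0 ∈ Finset.univ.filter (fun S0 : Equiv.Perm (Fin (2*k)) => IsPairPartition S0),
        (-1 : ℤ) ^ (k - numLoops S0 S1) *
          (if P0cond S0 f ∧ P1cond S0 S1 f ∧ P2cond S2 f then 1 else 0) = 0 := by
  classical
  rw [Function.not_injective_iff] at hninj
  obtain ⟨l1, l2, hf, hnel⟩ := hninj
  have hττ : Equiv.swap l1 l2 * Equiv.swap l1 l2 = 1 := Equiv.swap_mul_self l1 l2
  apply Finset.sum_involution
    (fun S0 _ => Equiv.swap l1 l2 * S0 * Equiv.swap l1 l2)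
  · -- main cancellation
    intro S0 hS0
    have h0 : IsPairPartition S0 := (Finset.mem_filter.1 hS0).2
    by_cases hC : P0cond S0 f ∧ P1cond S0 S1 f ∧ P2cond S2 f
    · obtain ⟨hP0, hP1, hP2⟩ := hC
      have hcc := cond_conj hf hP0 hP1
      have hP0' := hcc.1
      have hP1' := hcc.2
      have h0' : IsPairPartition (Equiv.swap l1 l2 * S0 * Equiv.swap l1 l2) :=
        isPP_conj h0
      rw [if_pos ⟨hP0, hP1, hP2⟩, if_pos ⟨hP0', hP1', hP2⟩, mul_one, mul_one]
      -- distinguished points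
      have hal1 : S0 l1 ≠ l1 := h0.2 l1
      have hbl2 : S0 l2 ≠ l2 := h0.2 l2
      have hal2 : S0 l1 ≠ l2 := by
        intro h
        have hcol := (hP0 l1).2.2
        rw [h, ← hf] at hcol
        exact hcol rfl
      have hbl1 : S0 l2 ≠ l1 := by
        intro h
        have hcol := (hP0 l2).2.2
        rw [h, hf] at hcol
        exact hcol rfl
      have hab : S0 l1 ≠ S0 l2 := fun h => hnel (S0.injective h)
      have hst : S1 (S0 l1) ≠ S1 (S0 l2) := fun h => hab (S1.injective h)
      have hℓ : (f l1).2 % 2 < 2 := Nat.mod_lt _ (by norm_num)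
      have hεS1 : ∀ x, (f (S1 x)).2 % 2 ≠ (f x).2 % 2 := by
        intro x
        have := col_flip_S1 hP0 hP1 x
        omega
      -- exact column values of s and t
      have hcols : (f (S1 (S0 l1))).2 = (f l1).2 := by
        have h1' := (hP0 l1).2
        have h2' := col_flip_S1 hP0 hP1 (S0 l1)
        omega
      have hcolt : (f (S1 (S0 l2))).2 = (f l1).2 := by
        have h1' := (hP0 l2).2
        have h2' := col_flip_S1 hP0 hP1 (S0 l2)
        rw [← hf] at h1'
        omega
      have hsL : S1 (S0 l1) ∈ Finset.univ.filter
          (fun x : Fin (2*k) => (f x).2 % 2 = (f l1).2 % 2) :=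
        Finset.mem_filter.2 ⟨Finset.mem_univ _, by rw [hcols]⟩
      have htL : S1 (S0 l2) ∈ Finset.univ.filter
          (fun x : Fin (2*k) => (f x).2 % 2 = (f l1).2 % 2) :=
        Finset.mem_filter.2 ⟨Finset.mem_univ _, by rw [hcolt]⟩
      -- numLoops as level counts
      have hn : numLoops S0 S1 =
          ((Finset.univ.filter (fun x : Fin (2*k) => (f x).2 % 2 = (f l1).2 % 2)).image
            (cls (S0 * S1).SameCycle)).card :=
        numLoops_eq_level h0 h1 hP0 hP1 hℓ
      have hn' : numLoops (Equiv.swap l1 l2 * S0 * Equiv.swap l1 l2) S1 =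
          ((Finset.univ.filter (fun x : Fin (2*k) => (f x).2 % 2 = (f l1).2 % 2)).image
            (cls ((Equiv.swap l1 l2 * S0 * Equiv.swap l1 l2) * S1).SameCycle)).card :=
        numLoops_eq_level h0' h1 hP0' hP1' hℓ
      -- the conjugated product agrees with (S0*S1) * swap s t on the level set
      have himg :
          ((Finset.univ.filter (fun x : Fin (2*k) => (f x).2 % 2 = (f l1).2 % 2)).image
            (cls ((Equiv.swap l1 l2 * S0 * Equiv.swap l1 l2) * S1).SameCycle)) =
          ((Finset.univ.filter (fun x : Fin (2*k) => (f x).2 % 2 = (f l1).2 % 2)).image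
            (cls ((S0 * S1) * Equiv.swap (S1 (S0 l1)) (S1 (S0 l2))).SameCycle)) := by
        apply Finset.image_congr
        intro x hx
        have hxA : (f x).2 % 2 = (f l1).2 % 2 := (Finset.mem_filter.1 hx).2
        have hA1 : ∀ y ∈ {y : Fin (2*k) | (f y).2 % 2 = (f l1).2 % 2},
            ((Equiv.swap l1 l2 * S0 * Equiv.swap l1 l2) * S1) y ∈
              {y : Fin (2*k) | (f y).2 % 2 = (f l1).2 % 2} := by
          intro y hy
          show (f (((Equiv.swap l1 l2 * S0 * Equiv.swap l1 l2) * S1) y)).2 % 2 = _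
          rw [Perm.mul_apply, hP1' y]
          exact hy
        have hA2 : ∀ y ∈ {y : Fin (2*k) | (f y).2 % 2 = (f l1).2 % 2},
            ((S0 * S1) * Equiv.swap (S1 (S0 l1)) (S1 (S0 l2))) y ∈
              {y : Fin (2*k) | (f y).2 % 2 = (f l1).2 % 2} := by
          intro y hy
          show (f (((S0 * S1) * Equiv.swap (S1 (S0 l1)) (S1 (S0 l2))) y)).2 % 2 = _
          rw [Perm.mul_apply]
          by_cases hys : y = S1 (S0 l1)
          · rw [hys, Equiv.swap_apply_left, Perm.mul_apply, hP1 (S1 (S0 l2))]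
            rw [hcolt]
          · by_cases hyt : y = S1 (S0 l2)
            · rw [hyt, Equiv.swap_apply_right, Perm.mul_apply, hP1 (S1 (S0 l1))]
              rw [hcols]
            · rw [Equiv.swap_apply_of_ne_of_ne hys hyt, Perm.mul_apply, hP1 y]
              exact hy
        have hagreeA : ∀ y ∈ {y : Fin (2*k) | (f y).2 % 2 = (f l1).2 % 2},
            ((Equiv.swap l1 l2 * S0 * Equiv.swap l1 l2) * S1) y =
              ((S0 * S1) * Equiv.swap (S1 (S0 l1)) (S1 (S0 l2))) y := by
          intro y hy
          have hy' : (f y).2 % 2 = (f l1).2 % 2 := hy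
          simp only [Perm.mul_apply]
          by_cases hys : y = S1 (S0 l1)
          · rw [hys, Equiv.swap_apply_left, h1.1, h1.1, h0.1,
              Equiv.swap_apply_of_ne_of_ne hal1 hal2, h0.1, Equiv.swap_apply_left]
          · by_cases hyt : y = S1 (S0 l2)
            · rw [hyt, Equiv.swap_apply_right, h1.1, h1.1, h0.1,
                Equiv.swap_apply_of_ne_of_ne hbl1 hbl2, h0.1, Equiv.swap_apply_right]
            · rw [Equiv.swap_apply_of_ne_of_ne hys hyt]
              have hy1 : S1 y ≠ l1 := by
                intro h
                have hyy : y = S1 l1 := by rw [← h1.1 y, h]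
                rw [hyy] at hy'
                exact hεS1 l1 hy'
              have hy2 : S1 y ≠ l2 := by
                intro h
                have hyy : y = S1 l2 := by rw [← h1.1 y, h]
                rw [hyy] at hy'
                have := hεS1 l2
                rw [← hf] at this
                exact this hy'
              have hz1 : S0 (S1 y) ≠ l1 := by
                intro h
                apply hys
                have : S1 y = S0 l1 := by rw [← h, h0.1]
                rw [← h1.1 y, this]
              have hz2 : S0 (S1 y) ≠ l2 := by
                intro h
                apply hyt
                have : S1 y = S0 l2 := by rw [← h, h0.1]
                rw [← h1.1 y, this]
              rw [Equiv.swap_apply_of_ne_of_ne hy1 hy2,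
                Equiv.swap_apply_of_ne_of_ne hz1 hz2]
        ext y
        simp only [mem_cls]
        exact sameCycle_iff_of_agree hA1 hA2 hagreeA hxA
      -- split counts
      have hsplitπ := card_image_cls_split (S0 * S1) hst hsL htL
      have hsplitσ := card_image_cls_split
        ((S0 * S1) * Equiv.swap (S1 (S0 l1)) (S1 (S0 l2))) hst hsL htL
      have hagree_off : ∀ y, y ≠ S1 (S0 l1) → y ≠ S1 (S0 l2) →
          ((S0 * S1) * Equiv.swap (S1 (S0 l1)) (S1 (S0 l2))) y = (S0 * S1) y := by
        intro y h1y h2y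
        rw [Perm.mul_apply, Equiv.swap_apply_of_ne_of_ne h1y h2y]
      have hrest := rest_image_cls_eq hagree_off
        (Finset.univ.filter (fun x : Fin (2*k) => (f x).2 % 2 = (f l1).2 % 2))
      have hxor := sameCycle_mul_swap_iff (π := S0 * S1) hst
      have hdiff : numLoops S0 S1 = numLoops (Equiv.swap l1 l2 * S0 * Equiv.swap l1 l2) S1 + 1 ∨
          numLoops (Equiv.swap l1 l2 * S0 * Equiv.swap l1 l2) S1 = numLoops S0 S1 + 1 := by
        rw [hn, hn', himg, hsplitπ, hsplitσ, ← hrest]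
        by_cases hsc : (S0 * S1).SameCycle (S1 (S0 l1)) (S1 (S0 l2))
        · rw [if_pos hsc, if_neg (fun h => (hxor.1 h) hsc)]
          omega
        · rw [if_neg hsc, if_pos (hxor.2 hsc)]
          omega
      have hb : numLoops S0 S1 ≤ k := by
        have := two_mul_numLoops_le (S1 := S1) h0
        omega
      have hb' : numLoops (Equiv.swap l1 l2 * S0 * Equiv.swap l1 l2) S1 ≤ k := by
        have := two_mul_numLoops_le (S1 := S1) h0'
        omega
      exact neg_one_pow_add_eq_zero hb hb' hdiff
    · have hC' : ¬ (P0cond (Equiv.swap l1 l2 * S0 * Equiv.swap l1 l2) f ∧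
          P1cond (Equiv.swap l1 l2 * S0 * Equiv.swap l1 l2) S1 f ∧ P2cond S2 f) := by
        intro h
        apply hC
        have hcc := cond_conj hf h.1 h.2.1
        have hback : Equiv.swap l1 l2 * (Equiv.swap l1 l2 * S0 * Equiv.swap l1 l2) *
            Equiv.swap l1 l2 = S0 := by
          calc Equiv.swap l1 l2 * (Equiv.swap l1 l2 * S0 * Equiv.swap l1 l2) *
                Equiv.swap l1 l2
              = (Equiv.swap l1 l2 * Equiv.swap l1 l2) * S0 *
                (Equiv.swap l1 l2 * Equiv.swap l1 l2) := by
                simp only [mul_assoc]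
            _ = S0 := by rw [hττ, one_mul, mul_one]
        rw [hback] at hcc
        exact ⟨hcc.1, hcc.2, h.2.2⟩
      rw [if_neg hC, if_neg hC', mul_zero, mul_zero, add_zero]
  · -- nonzero terms are moved
    intro S0 hS0 hne heq
    have h0 : IsPairPartition S0 := (Finset.mem_filter.1 hS0).2
    have hC : P0cond S0 f ∧ P1cond S0 S1 f ∧ P2cond S2 f := by
      by_contra h
      rw [if_neg h, mul_zero] at hne
      exact hne rfl
    have hal1 : S0 l1 ≠ l1 := h0.2 l1
    have hal2 : S0 l1 ≠ l2 := by
      intro h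
      have hcol := (hC.1 l1).2.2
      rw [h, ← hf] at hcol
      exact hcol rfl
    have := congrArg (fun (g : Equiv.Perm (Fin (2*k))) => g l2) heq
    simp only [Perm.mul_apply, Equiv.swap_apply_right] at this
    rw [Equiv.swap_apply_of_ne_of_ne hal1 hal2] at this
    exact hnel (S0.injective this)
  · -- membership
    intro S0 hS0
    exact Finset.mem_filter.2 ⟨Finset.mem_univ _, isPP_conj (Finset.mem_filter.1 hS0).2⟩
  · -- involutive
    intro S0 hS0
    calc Equiv.swap l1 l2 * (Equiv.swap l1 l2 * S0 * Equiv.swap l1 l2) * Equiv.swap l1 l2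
        = (Equiv.swap l1 l2 * Equiv.swap l1 l2) * S0 *
          (Equiv.swap l1 l2 * Equiv.swap l1 l2) := by simp only [mul_assoc]
      _ = S0 := by rw [hττ, one_mul, mul_one]

end ZonalPP
end

section
/- Let S₀, S₁, S₂ be pair-partitions of [2k], let d ≥ 1, let p₁,…,p_d and q₁ ≥ q₂ ≥ … ≥ q_d be positive integers, and let λ = p×q be the partition consisting of p₁ parts equal to q₁, then p₂ parts equal to q₂, etc. Then N^{(1)}_{S₀,S₁,S₂}(λ) = Σ_{φ} ∏_{ℓ ∈ L(S₀,S₂)} p_{φ(ℓ)} · ∏_{m ∈ L(S₀,S₁)} q_{ψ(m)}, where the sum runs over all functions φ from the set of loops L(S₀,S₂) to {1,…,d}, and ψ(m) := max{ φ(ℓ) : ℓ ∈ L(S₀,S₂) and ℓ ∩ m ≠ ∅ }. -/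
open scoped BigOperators

namespace ZonalPP

/-- Stanley's coordinates: the partition `p × q` consisting of `p 0` parts equal to `q 0`,
then `p 1` parts equal to `q 1`, etc. -/
def stanley {d : ℕ} (p q : Fin d → ℕ) (hq : ∀ i, 0 < q i) :
    Nat.Partition (∑ i, p i * q i) where
  parts := Finset.univ.val.bind fun i => Multiset.replicate (p i) (q i)
  parts_pos := by
    intro i hi
    rw [Multiset.mem_bind] at hi
    obtain ⟨j, -, hj⟩ := hi
    rw [Multiset.eq_of_mem_replicate hj]
    exact hq j
  parts_sum := by
    simp [Multiset.sum_bind, Multiset.sum_replicate, Finset.sum, smul_eq_mul]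

open Classical in
/-- Every loop of `L(a,b)` meets some loop of `L(a,c)`. -/
lemma adj_nonempty {N : ℕ} (a b c : Equiv.Perm (Fin N)) (m : Loops a b) :
    (Finset.univ.filter fun ℓ : Loops a c =>
        (loopSet m ∩ loopSet ℓ).Nonempty).Nonempty := by
  classical
  obtain ⟨x, hx⟩ : (loopSet m).Nonempty := by
    refine ⟨Quotient.out m, ?_⟩
    rw [loopSet, MulAction.orbitRel.Quotient.mem_orbit]
    exact Quotient.out_eq' m
  refine ⟨(Quotient.mk'' x : Loops a c), ?_⟩
  rw [Finset.mem_filter]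
  refine ⟨Finset.mem_univ _, ⟨x, hx, ?_⟩⟩
  rw [loopSet, MulAction.orbitRel.Quotient.mem_orbit]


lemma getD_pos_iff : ∀ (L : List ℕ), L.Pairwise (fun a b : ℕ => b ≤ a) → ∀ c n,
    (c < L.getD n 0 ↔ n < L.countP (fun x => decide (c < x)))
  | [], _, c, n => by simp
  | x :: t, hL, c, n => by
    obtain ⟨hx, ht⟩ := List.pairwise_cons.mp hL
    have hcount0 : ¬ c < x → t.countP (fun y => decide (c < y)) = 0 := by
      intro h
      rw [List.countP_eq_zero]
      intro y hy
      have := hx y hy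
      simp only [decide_eq_true_eq]
      omega
    cases n with
    | zero =>
      rw [List.getD_cons_zero, List.countP_cons]
      by_cases h : c < x
      · simp [h]
      · rw [hcount0 h, if_neg (by simpa using h)]
        constructor
        · intro hc; exact absurd hc h
        · omega
    | succ n =>
      rw [List.getD_cons_succ, List.countP_cons, getD_pos_iff t ht c n]
      by_cases h : c < x
      · simp [h]
      · rw [hcount0 h, if_neg (by simpa using h)]
        omega

lemma countP_bind {α β : Type*} (s : Multiset α) (f : α → Multiset β) (pr : β → Prop)
    [DecidablePred pr] :
    (s.bind f).countP pr = (s.map fun a => (f a).countP pr).sum := by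
  induction s using Multiset.induction with
  | empty => simp
  | cons a s ih => simp [ih]

lemma countP_replicate {α : Type*} (n : ℕ) (a : α) (pr : α → Prop) [DecidablePred pr] :
    (Multiset.replicate n a).countP pr = if pr a then n else 0 := by
  induction n with
  | zero => simp
  | succ n ih => rw [Multiset.replicate_succ, Multiset.countP_cons]; split <;> simp_all

section Blocks
variable {d : ℕ} (p q : Fin d → ℕ)

/-- Partial sums of `p` over indices `< t`. -/
def Pfun (t : ℕ) : ℕ := ∑ i ∈ Finset.univ.filter (fun i : Fin d => (i : ℕ) < t), p i

lemma Pfun_mono {s t : ℕ} (h : s ≤ t) : Pfun p s ≤ Pfun p t :=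
  Finset.sum_le_sum_of_subset (by
    intro i hi
    simp only [Finset.mem_filter, Finset.mem_univ, true_and] at *
    omega)

lemma Pfun_d : Pfun p d = ∑ i, p i := by
  unfold Pfun
  rw [Finset.filter_true_of_mem]
  intro i _
  exact i.isLt

lemma Pfun_zero : Pfun p 0 = 0 := by
  unfold Pfun
  convert Finset.sum_empty
  ext i
  simp

lemma Pfun_succ (i : Fin d) : Pfun p ((i : ℕ) + 1) = Pfun p (i : ℕ) + p i := by
  unfold Pfun
  have h : Finset.univ.filter (fun j : Fin d => (j : ℕ) < (i : ℕ) + 1)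
      = insert i (Finset.univ.filter (fun j : Fin d => (j : ℕ) < (i : ℕ))) := by
    ext j
    simp only [Finset.mem_filter, Finset.mem_univ, true_and, Finset.mem_insert]
    constructor
    · intro h
      rcases Nat.lt_succ_iff_lt_or_eq.mp h with h | h
      · exact Or.inr h
      · exact Or.inl (Fin.ext h)
    · rintro (rfl | h) <;> omega
  rw [h, Finset.sum_insert (by simp)]
  ring

/-- The block index of row `n` in the `p × q` rectangle decomposition. -/
noncomputable def blk (hd : 0 < d) (n : ℕ) : Fin d :=
  if h : ∃ t, t < d ∧ n < Pfun p (t + 1) then ⟨Nat.find h, (Nat.find_spec h).1⟩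
  else ⟨0, hd⟩

lemma blk_exists (hd : 0 < d) {n : ℕ} (hn : n < ∑ i, p i) :
    ∃ t, t < d ∧ n < Pfun p (t + 1) :=
  ⟨d - 1, by omega, by rw [Nat.sub_add_cancel hd, Pfun_d]; exact hn⟩

lemma blk_spec (hd : 0 < d) {n : ℕ} (hn : n < ∑ i, p i) :
    Pfun p (blk p hd n : ℕ) ≤ n ∧ n < Pfun p ((blk p hd n : ℕ) + 1) := by
  have h := blk_exists p hd hn
  rw [blk, dif_pos h]
  refine ⟨?_, (Nat.find_spec h).2⟩
  show Pfun p (Nat.find h) ≤ n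
  rcases Nat.eq_zero_or_pos (Nat.find h) with h0 | h0
  · rw [h0, Pfun_zero]
    exact Nat.zero_le n
  · have h2 : ¬ (Nat.find h - 1 < d ∧ n < Pfun p (Nat.find h - 1 + 1)) :=
      Nat.find_min h (by omega)
    have h3 : Nat.find h - 1 + 1 = Nat.find h := by omega
    rw [h3] at h2
    have hlt : Nat.find h - 1 < d := by have := (Nat.find_spec h).1; omega
    omega

lemma blk_le (hd : 0 < d) {n : ℕ} (hn : n < ∑ i, p i) {t : ℕ} (htd : t < d)
    (ht : n < Pfun p (t + 1)) : (blk p hd n : ℕ) ≤ t := by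
  rw [blk, dif_pos (blk_exists p hd hn)]
  exact Nat.find_min' _ ⟨htd, ht⟩

lemma blk_eq (hd : 0 < d) (i : Fin d) {j : ℕ} (hj : j < p i) :
    blk p hd (Pfun p (i : ℕ) + j) = i := by
  have h1 : Pfun p (i : ℕ) + j < Pfun p ((i : ℕ) + 1) := by rw [Pfun_succ]; omega
  have hn : Pfun p (i : ℕ) + j < ∑ i, p i :=
    lt_of_lt_of_le h1 (by rw [← Pfun_d]; exact Pfun_mono p (by omega))
  have hs := blk_spec p hd hn
  apply Fin.ext
  have h2 : (blk p hd (Pfun p (i : ℕ) + j) : ℕ) ≤ (i : ℕ) := blk_le p hd hn i.isLt h1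
  by_contra hne
  have h3 : (blk p hd (Pfun p (i : ℕ) + j) : ℕ) + 1 ≤ (i : ℕ) := by omega
  have h4 := Pfun_mono p h3
  omega

lemma lt_sum_lowerset (hd : 0 < d) (S : Finset (Fin d))
    (hS : ∀ i j : Fin d, i ≤ j → j ∈ S → i ∈ S) {n : ℕ} (hn : n < ∑ i, p i) :
    (n < ∑ i ∈ S, p i ↔ blk p hd n ∈ S) := by
  constructor
  · intro h
    by_contra hb
    have hsub : S ⊆ Finset.univ.filter (fun j : Fin d => (j : ℕ) < (blk p hd n : ℕ)) := by
      intro i hi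
      simp only [Finset.mem_filter, Finset.mem_univ, true_and]
      by_contra hlt
      exact hb (hS _ i (by rw [Fin.le_def]; omega) hi)
    have h1 : ∑ i ∈ S, p i ≤
        ∑ i ∈ Finset.univ.filter (fun j : Fin d => (j : ℕ) < (blk p hd n : ℕ)), p i :=
      Finset.sum_le_sum_of_subset hsub
    have h2 := (blk_spec p hd hn).1
    unfold Pfun at h2
    omega
  · intro h
    have hsub : Finset.univ.filter (fun j : Fin d => (j : ℕ) < (blk p hd n : ℕ) + 1) ⊆ S := by
      intro i hi
      simp only [Finset.mem_filter, Finset.mem_univ, true_and] at hi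
      exact hS i (blk p hd n) (by rw [Fin.le_def]; omega) h
    have h1 : ∑ i ∈ Finset.univ.filter (fun j : Fin d => (j : ℕ) < (blk p hd n : ℕ) + 1), p i ≤
        ∑ i ∈ S, p i :=
      Finset.sum_le_sum_of_subset hsub
    have h2 := (blk_spec p hd hn).2
    unfold Pfun at h2
    omega

end Blocks
section StanleyRow
variable {d : ℕ} (p q : Fin d → ℕ)

lemma countP_parts (hq : ∀ i, 0 < q i) (c : ℕ) :
    (stanley p q hq).parts.countP (fun x => c < x)
      = ∑ i ∈ Finset.univ.filter (fun i => c < q i), p i := by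
  show (Finset.univ.val.bind fun i => Multiset.replicate (p i) (q i)).countP (fun x => c < x) = _
  rw [countP_bind, Finset.sum_filter]
  rw [Finset.sum_eq_multiset_sum]
  congr 1
  apply Multiset.map_congr rfl
  intro i _
  rw [countP_replicate]

lemma lt_rowLen_stanley_iff (hd : 0 < d) (hq : ∀ i, 0 < q i)
    (hmono : ∀ i j : Fin d, i ≤ j → q j ≤ q i) (c n : ℕ) :
    c < rowLen (stanley p q hq) n ↔ n < ∑ i, p i ∧ c < q (blk p hd n) := by
  classical
  have hlower : ∀ i j : Fin d, i ≤ j → j ∈ Finset.univ.filter (fun i => c < q i) →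
      i ∈ Finset.univ.filter (fun i => c < q i) := by
    intro i j hij hj
    simp only [Finset.mem_filter, Finset.mem_univ, true_and] at *
    exact lt_of_lt_of_le hj (hmono i j hij)
  rw [rowLen, getD_pos_iff _ (by
    rw [List.pairwise_reverse]
    exact Multiset.pairwise_sort _ _)]
  rw [List.countP_reverse]
  have hcoe : ((stanley p q hq).parts.sort (· ≤ ·)).countP (fun x => decide (c < x))
      = (stanley p q hq).parts.countP (fun x => c < x) := by
    rw [← Multiset.coe_countP, Multiset.sort_eq]
  rw [hcoe, countP_parts p q hq c]
  have hSum_le : ∑ i ∈ Finset.univ.filter (fun i => c < q i), p i ≤ ∑ i, p i :=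
    Finset.sum_le_sum_of_subset (Finset.filter_subset _ _)
  constructor
  · intro h
    have hn : n < ∑ i, p i := lt_of_lt_of_le h hSum_le
    have := (lt_sum_lowerset p hd _ hlower hn).mp h
    simp only [Finset.mem_filter, Finset.mem_univ, true_and] at this
    exact ⟨hn, this⟩
  · rintro ⟨hn, hc⟩
    refine (lt_sum_lowerset p hd _ hlower hn).mpr ?_
    simp only [Finset.mem_filter, Finset.mem_univ, true_and]
    exact hc

end StanleyRow

section LoopsAux
variable {N : ℕ}

lemma left_mem_cl (a b : Equiv.Perm (Fin N)) :
    a ∈ Subgroup.closure ({a, b} : Set (Equiv.Perm (Fin N))) :=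
  Subgroup.subset_closure (Set.mem_insert _ _)

lemma right_mem_cl (a b : Equiv.Perm (Fin N)) :
    b ∈ Subgroup.closure ({a, b} : Set (Equiv.Perm (Fin N))) :=
  Subgroup.subset_closure (Set.mem_insert_iff.mpr (Or.inr rfl))

lemma mk_apply_eq {a b : Equiv.Perm (Fin N)} (g : Equiv.Perm (Fin N))
    (hg : g ∈ Subgroup.closure ({a, b} : Set (Equiv.Perm (Fin N)))) (x : Fin N) :
    (Quotient.mk'' (g x) : Loops a b) = Quotient.mk'' x := by
  apply Quotient.sound'
  rw [MulAction.orbitRel_apply]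
  exact ⟨⟨g, hg⟩, rfl⟩

lemma invar_closure {β : Type*} {a b : Equiv.Perm (Fin N)} (r0 : Fin N → β)
    (ha : ∀ x, r0 (a x) = r0 x) (hb : ∀ x, r0 (b x) = r0 x) :
    ∀ g ∈ Subgroup.closure ({a, b} : Set (Equiv.Perm (Fin N))), ∀ x, r0 (g x) = r0 x := by
  intro g hg
  induction hg using Subgroup.closure_induction with
  | mem g hx =>
    simp only [Set.mem_insert_iff, Set.mem_singleton_iff] at hx
    rcases hx with rfl | rfl
    · exact ha
    · exact hb
  | one => intro x; rfl
  | mul g h hg hh ihg ihh => intro x; rw [Equiv.Perm.mul_apply, ihg, ihh]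
  | inv g hg ihg =>
    intro x
    have := ihg (g⁻¹ x)
    rw [← Equiv.Perm.mul_apply, mul_inv_cancel, Equiv.Perm.one_apply] at this
    exact this.symm

noncomputable def loopLift {β : Type*} {a b : Equiv.Perm (Fin N)} (r0 : Fin N → β)
    (hab : ∀ g ∈ Subgroup.closure ({a, b} : Set (Equiv.Perm (Fin N))), ∀ x, r0 (g x) = r0 x) :
    Loops a b → β :=
  Quotient.lift r0 (fun x y hxy => by
    have hxy' : x ∈ MulAction.orbit
        (Subgroup.closure ({a, b} : Set (Equiv.Perm (Fin N)))) y := hxy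
    obtain ⟨g, rfl⟩ := hxy'
    exact hab g.1 g.2 y)

@[simp] lemma loopLift_mk {β : Type*} {a b : Equiv.Perm (Fin N)} (r0 : Fin N → β)
    (hab : ∀ g ∈ Subgroup.closure ({a, b} : Set (Equiv.Perm (Fin N))), ∀ x, r0 (g x) = r0 x)
    (x : Fin N) : loopLift r0 hab (Quotient.mk'' x : Loops a b) = r0 x := rfl

lemma mem_loopSet_self {a b : Equiv.Perm (Fin N)} (x : Fin N) :
    x ∈ loopSet (Quotient.mk'' x : Loops a b) := by
  rw [loopSet, MulAction.orbitRel.Quotient.mem_orbit]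

lemma eq_of_mem_loopSet {a b : Equiv.Perm (Fin N)} {x : Fin N} {m : Loops a b}
    (h : x ∈ loopSet m) : (Quotient.mk'' x : Loops a b) = m := by
  rwa [loopSet, MulAction.orbitRel.Quotient.mem_orbit] at h

lemma exists_mk_eq {a b : Equiv.Perm (Fin N)} (m : Loops a b) :
    ∃ x : Fin N, (Quotient.mk'' x : Loops a b) = m :=
  ⟨m.out, m.out_eq⟩

end LoopsAux

open Classical in
/-- `ψ(m)`: the maximum of `φ` over the loops of `L(S₀,S₂)` meeting `m`. -/
noncomputable def psi {k d : ℕ} (S0 S1 S2 : Equiv.Perm (Fin (2*k)))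
    (φ : Loops S0 S2 → Fin d) (m : Loops S0 S1) : Fin d :=
  (Finset.univ.filter fun ℓ : Loops S0 S2 => (loopSet m ∩ loopSet ℓ).Nonempty).sup'
    (adj_nonempty S0 S1 S2 m) φ

open Classical in
/-- Expression of `N¹_{S₀,S₁,S₂}(p × q)` in Stanley's coordinates:
`N¹ = Σ_φ ∏_{ℓ ∈ L(S₀,S₂)} p_{φ(ℓ)} ∏_{m ∈ L(S₀,S₁)} q_{ψ(m)}`, where `φ` runs over all
functions from the loops of `L(S₀,S₂)` to `{1,…,d}` and `ψ(m)` is the maximum of `φ(ℓ)`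
over the loops `ℓ` of `L(S₀,S₂)` meeting `m`. -/
theorem statement15 {k d : ℕ} (hd : 1 ≤ d)
    (S0 S1 S2 : Equiv.Perm (Fin (2*k)))
    (h0 : IsPairPartition S0) (h1 : IsPairPartition S1) (h2 : IsPairPartition S2)
    (p q : Fin d → ℕ) (hp : ∀ i, 0 < p i) (hq : ∀ i, 0 < q i)
    (hmono : ∀ i j : Fin d, i ≤ j → q j ≤ q i) :
    N1 S0 S1 S2 (stanley p q hq) =
      ∑ φ : Loops S0 S2 → Fin d,
        (∏ ℓ : Loops S0 S2, p (φ ℓ)) *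
          ∏ m : Loops S0 S1,
            q (Finset.sup' (Finset.univ.filter fun ℓ : Loops S0 S2 =>
                (loopSet m ∩ loopSet ℓ).Nonempty) (adj_nonempty S0 S1 S2 m) φ) := by
  classical
  have hd0 : 0 < d := hd
  -- Step 1: functions satisfying the constraints correspond to pairs of functions on loops
  have e1 : {f : Fin (2*k) → ℕ × ℕ //
      (∀ l, (f l).2 < rowLen (stanley p q hq) (f l).1) ∧ (∀ l, f (S0 l) = f l) ∧
      (∀ l, (f (S1 l)).2 = (f l).2) ∧ (∀ l, (f (S2 l)).1 = (f l).1)} ≃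
      {rc : (Loops S0 S2 → ℕ) × (Loops S0 S1 → ℕ) //
        ∀ x : Fin (2*k), rc.2 (Quotient.mk'' x) <
          rowLen (stanley p q hq) (rc.1 (Quotient.mk'' x))} :=
    { toFun := fun ⟨f, hf⟩ =>
        ⟨(loopLift (fun x => (f x).1)
            (invar_closure (fun x => (f x).1)
              (fun x => congrArg Prod.fst (hf.2.1 x)) (fun x => hf.2.2.2 x)),
          loopLift (fun x => (f x).2)
            (invar_closure (fun x => (f x).2)
              (fun x => congrArg Prod.snd (hf.2.1 x)) (fun x => hf.2.2.1 x))),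
         fun x => hf.1 x⟩
      invFun := fun ⟨⟨r, c⟩, hrc⟩ =>
        ⟨fun x => (r (Quotient.mk'' x), c (Quotient.mk'' x)),
         fun x => hrc x,
         fun x => by
           have hr := congrArg r (mk_apply_eq S0 (left_mem_cl S0 S2) x)
           have hc := congrArg c (mk_apply_eq S0 (left_mem_cl S0 S1) x)
           dsimp only
           rw [hr, hc],
         fun x => by
           have hc := congrArg c (mk_apply_eq S1 (right_mem_cl S0 S1) x)
           simpa using hc,
         fun x => by
           have hr := congrArg r (mk_apply_eq S2 (right_mem_cl S0 S2) x)
           simpa using hr⟩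
      left_inv := fun ⟨f, hf⟩ => rfl
      right_inv := fun ⟨⟨r, c⟩, h⟩ => by
        apply Subtype.ext
        refine Prod.ext ?_ ?_
        · exact funext fun ℓ => Quotient.inductionOn' ℓ fun x => rfl
        · exact funext fun m => Quotient.inductionOn' m fun x => rfl }
  -- Step 2: replace the row value by block index + offset
  have e2 : {rc : (Loops S0 S2 → ℕ) × (Loops S0 S1 → ℕ) //
        ∀ x : Fin (2*k), rc.2 (Quotient.mk'' x) <
          rowLen (stanley p q hq) (rc.1 (Quotient.mk'' x))} ≃
      {w : (Loops S0 S2 → Fin d) × ((Loops S0 S2 → ℕ) × (Loops S0 S1 → ℕ)) //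
        (∀ ℓ, w.2.1 ℓ < p (w.1 ℓ)) ∧ (∀ m, w.2.2 m < q (psi S0 S1 S2 w.1 m))} :=
    { toFun := fun ⟨⟨r, c⟩, h⟩ => by
        refine ⟨((fun ℓ => blk p hd0 (r ℓ)),
          ((fun ℓ => r ℓ - Pfun p (blk p hd0 (r ℓ))), c)), ?_, ?_⟩
        · -- offsets are within blocks
          have key : ∀ ℓ : Loops S0 S2, r ℓ < ∑ i, p i := by
            intro ℓ
            obtain ⟨x, hx⟩ := exists_mk_eq ℓ
            have hx2 := h x
            rw [hx] at hx2
            exact ((lt_rowLen_stanley_iff p q hd0 hq hmono _ _).mp hx2).1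
          intro ℓ
          dsimp only
          have hs := blk_spec p hd0 (key ℓ)
          have hsucc := Pfun_succ p (blk p hd0 (r ℓ))
          omega
        · -- column values are bounded by q at the sup
          intro m
          obtain ⟨ℓs, hmem, hsup⟩ :=
            Finset.exists_mem_eq_sup' (adj_nonempty S0 S1 S2 m)
              (fun ℓ => blk p hd0 (r ℓ))
          simp only [Finset.mem_filter, Finset.mem_univ, true_and] at hmem
          obtain ⟨x, hx1, hx2⟩ := hmem
          have hm := eq_of_mem_loopSet hx1
          have hl := eq_of_mem_loopSet hx2
          have hx3 := h x
          rw [hm, hl] at hx3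
          have := ((lt_rowLen_stanley_iff p q hd0 hq hmono _ _).mp hx3).2
          show c m < q ((Finset.univ.filter fun ℓ : Loops S0 S2 =>
            (loopSet m ∩ loopSet ℓ).Nonempty).sup' (adj_nonempty S0 S1 S2 m)
              (fun ℓ => blk p hd0 (r ℓ)))
          rw [hsup]
          exact this
      invFun := fun ⟨⟨φ, a, c⟩, hw⟩ =>
        ⟨((fun ℓ => Pfun p (φ ℓ) + a ℓ), c), by
          have ha : ∀ ℓ, a ℓ < p (φ ℓ) := hw.1
          have hc : ∀ m, c m < q (psi S0 S1 S2 φ m) := hw.2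
          intro x
          dsimp only
          rw [lt_rowLen_stanley_iff p q hd0 hq hmono]
          constructor
          · have h1 : Pfun p (φ (Quotient.mk'' x)) + a (Quotient.mk'' x)
                < Pfun p ((φ (Quotient.mk'' x) : ℕ) + 1) := by
              rw [Pfun_succ]
              have := ha (Quotient.mk'' x)
              omega
            have h2 : Pfun p ((φ (Quotient.mk'' x) : ℕ) + 1) ≤ ∑ i, p i := by
              rw [← Pfun_d]
              exact Pfun_mono p (φ (Quotient.mk'' x)).isLt
            omega
          · rw [blk_eq p hd0 _ (ha (Quotient.mk'' x))]
            refine lt_of_lt_of_le (hc (Quotient.mk'' x)) (hmono _ _ ?_)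
            refine Finset.le_sup' φ ?_
            simp only [Finset.mem_filter, Finset.mem_univ, true_and]
            exact ⟨x, mem_loopSet_self x, mem_loopSet_self x⟩⟩
      left_inv := fun ⟨⟨r, c⟩, h⟩ => by
        apply Subtype.ext
        dsimp only
        refine Prod.ext ?_ rfl
        funext ℓ
        have key : r ℓ < ∑ i, p i := by
          obtain ⟨x, hx⟩ := exists_mk_eq ℓ
          have hx2 := h x
          rw [hx] at hx2
          exact ((lt_rowLen_stanley_iff p q hd0 hq hmono _ _).mp hx2).1
        have hs := blk_spec p hd0 key
        dsimp only
        omega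
      right_inv := fun ⟨⟨φ, a, c⟩, hw⟩ => by
        have ha : ∀ ℓ, a ℓ < p (φ ℓ) := hw.1
        apply Subtype.ext
        dsimp only
        refine Prod.ext ?_ (Prod.ext ?_ rfl)
        · funext ℓ
          exact blk_eq p hd0 _ (ha ℓ)
        · funext ℓ
          dsimp only
          rw [blk_eq p hd0 _ (ha ℓ)]
          omega }
  -- Step 3: pack into a sigma type of dependent functions
  have e3 : {w : (Loops S0 S2 → Fin d) × ((Loops S0 S2 → ℕ) × (Loops S0 S1 → ℕ)) //
        (∀ ℓ, w.2.1 ℓ < p (w.1 ℓ)) ∧ (∀ m, w.2.2 m < q (psi S0 S1 S2 w.1 m))} ≃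
      Σ φ : Loops S0 S2 → Fin d,
        ((∀ ℓ : Loops S0 S2, Fin (p (φ ℓ))) ×
          (∀ m : Loops S0 S1, Fin (q (psi S0 S1 S2 φ m)))) :=
    { toFun := fun ⟨⟨φ, a, c⟩, hw⟩ =>
        ⟨φ, (fun ℓ => ⟨a ℓ, hw.1 ℓ⟩, fun m => ⟨c m, hw.2 m⟩)⟩
      invFun := fun ⟨φ, u, v⟩ =>
        ⟨(φ, ((fun ℓ => (u ℓ : ℕ)), fun m => (v m : ℕ))),
          fun ℓ => (u ℓ).isLt, fun m => (v m).isLt⟩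
      left_inv := fun ⟨⟨φ, a, c⟩, hw⟩ => rfl
      right_inv := fun ⟨φ, u, v⟩ => rfl }
  show Nat.card _ = _
  rw [Nat.card_congr (e1.trans (e2.trans e3)), Nat.card_eq_fintype_card,
    Fintype.card_sigma]
  apply Finset.sum_congr rfl
  intro φ _
  rw [Fintype.card_prod, Fintype.card_pi, Fintype.card_pi]
  simp only [Fintype.card_fin]
  rfl

end ZonalPP
end
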